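/- arXiv:math-ph/0609040 — 7 statements merged into one kernel-verified Lean document; each statement's English description precedes it below -/
import Mathlib

section
/- Let σ be a Borel probability measure on ℝ. Then for every y ∈ ℝ and every a ∈ ℝ \ {0}, one has |Re(a·F_σ(y + ia))| ≤ ∫_ℝ 1/√(((x − y)/a)² + 1) dσ(x) ≤ |Im(a·F_σ(y + ia))|^{1/2}. -/
open MeasureTheory Complex Set

/-- The Borel transform of a measure `σ` on `ℝ`: `F_σ(z) = ∫ 1/(x - z) dσ(x)`. -/
noncomputable def borelTransform (σ : Measure ℝ) (z : ℂ) : ℂ :=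
  ∫ x : ℝ, ((x : ℂ) - z)⁻¹ ∂σ

theorem stmt2 (σ : Measure ℝ) [IsProbabilityMeasure σ] (y a : ℝ) (ha : a ≠ 0) :
    |((a : ℂ) * borelTransform σ ((y : ℂ) + (a : ℂ) * Complex.I)).re| ≤
      ∫ x : ℝ, 1 / Real.sqrt (((x - y) / a) ^ 2 + 1) ∂σ ∧
    (∫ x : ℝ, 1 / Real.sqrt (((x - y) / a) ^ 2 + 1) ∂σ) ≤
      |((a : ℂ) * borelTransform σ ((y : ℂ) + (a : ℂ) * Complex.I)).im| ^ ((1 : ℝ) / 2) := by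
  set z : ℂ := (y : ℂ) + (a : ℂ) * Complex.I with hz
  set g : ℝ → ℝ := fun x => 1 / Real.sqrt (((x - y) / a) ^ 2 + 1) with hgdef
  set f : ℝ → ℂ := fun x => (a : ℂ) * (((x:ℂ) - z))⁻¹ with hfdef
  have ha2 : (0:ℝ) < a ^ 2 := by positivity
  have haabs : (0:ℝ) < |a| := abs_pos.mpr ha
  have hD : ∀ x : ℝ, (0:ℝ) < (x - y) ^ 2 + a ^ 2 := fun x => by positivity
  have hsqD : ∀ x : ℝ, (0:ℝ) < Real.sqrt ((x - y) ^ 2 + a ^ 2) :=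
    fun x => Real.sqrt_pos.mpr (hD x)
  -- g rewritten
  have hg_eq : ∀ x : ℝ, g x = |a| / Real.sqrt ((x - y) ^ 2 + a ^ 2) := by
    intro x
    have : ((x - y) / a) ^ 2 + 1 = ((x - y) ^ 2 + a ^ 2) / a ^ 2 := by
      field_simp
    rw [hgdef]
    simp only
    rw [this, Real.sqrt_div (hD x).le, one_div_div, Real.sqrt_sq_eq_abs]
  -- pointwise description of the integrand
  have hre : ∀ x : ℝ, (f x).re = a * (x - y) / ((x - y) ^ 2 + a ^ 2) := by
    intro x
    simp [hfdef, hz, Complex.inv_re, Complex.inv_im, Complex.normSq_apply, Complex.mul_re,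
      Complex.mul_im]
    ring
  have him : ∀ x : ℝ, (f x).im = a ^ 2 / ((x - y) ^ 2 + a ^ 2) := by
    intro x
    simp [hfdef, hz, Complex.inv_re, Complex.inv_im, Complex.normSq_apply, Complex.mul_re,
      Complex.mul_im]
    ring
  -- g squared
  have hg_sq : ∀ x : ℝ, g x ^ 2 = a ^ 2 / ((x - y) ^ 2 + a ^ 2) := by
    intro x
    rw [hg_eq x, div_pow, _root_.sq_abs, Real.sq_sqrt (hD x).le]
  -- g bounds
  have hg_nonneg : ∀ x : ℝ, 0 ≤ g x := fun x => by
    rw [hg_eq x]; positivity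
  have hg_norm : ∀ x : ℝ, ‖g x‖ ≤ 1 := by
    intro x
    rw [Real.norm_eq_abs, _root_.abs_of_nonneg (hg_nonneg x), hg_eq x, div_le_one (hsqD x)]
    calc |a| = Real.sqrt (a ^ 2) := (Real.sqrt_sq_eq_abs a).symm
    _ ≤ _ := Real.sqrt_le_sqrt (by nlinarith [sq_nonneg (x - y)])
  have hg_le_one : ∀ x : ℝ, g x ≤ 1 := by
    intro x
    rw [hg_eq x, div_le_one (hsqD x)]
    calc |a| = Real.sqrt (a ^ 2) := (Real.sqrt_sq_eq_abs a).symm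
    _ ≤ _ := Real.sqrt_le_sqrt (by nlinarith [sq_nonneg (x - y)])
  -- continuity of g
  have hg_cont : Continuous g := by
    apply continuous_const.div
    · exact (Real.continuous_sqrt.comp (by continuity))
    · intro x
      have : (0:ℝ) < ((x - y)/a) ^ 2 + 1 := by positivity
      exact (Real.sqrt_pos.mpr this).ne'
  -- integrability of f
  have hne : ∀ x : ℝ, ((x:ℂ) - z) ≠ 0 := by
    intro x h
    have : ((x:ℂ) - z).im = 0 := by rw [h]; simp
    simp [hz] at this
    exact ha this
  have hf_cont : Continuous f := by
    apply continuous_const.mul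
    exact ((continuous_ofReal.sub continuous_const).inv₀ hne)
  have hf_bound : ∀ x : ℝ, ‖f x‖ ≤ 1 := by
    intro x
    have h1 : ‖f x‖ = |a| / ‖(x:ℂ) - z‖ := by
      rw [hfdef]
      simp [norm_mul, norm_inv, Complex.norm_real, div_eq_mul_inv]
    rw [h1, div_le_one (norm_pos_iff.mpr (hne x))]
    calc |a| = |((x:ℂ) - z).im| := by simp [hz]
    _ ≤ ‖(x:ℂ) - z‖ := Complex.abs_im_le_norm _
  have hf_int : Integrable f σ :=
    memLp_one_iff_integrable.mp
      (MemLp.of_bound hf_cont.aestronglyMeasurable 1 (ae_of_all _ hf_bound))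
  have hg_int : Integrable g σ :=
    memLp_one_iff_integrable.mp
      (MemLp.of_bound hg_cont.aestronglyMeasurable 1 (ae_of_all _ hg_norm))
  -- a * borelTransform = ∫ f
  have hmain : (a : ℂ) * borelTransform σ z = ∫ x, f x ∂σ := by
    rw [borelTransform, ← integral_const_mul]
  -- real and imaginary parts of the integral
  have hre_int : ((a : ℂ) * borelTransform σ z).re = ∫ x, (f x).re ∂σ := by
    rw [hmain]
    exact (ContinuousLinearMap.integral_comp_comm Complex.reCLM hf_int).symm
  have him_int : ((a : ℂ) * borelTransform σ z).im = ∫ x, (f x).im ∂σ := by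
    rw [hmain]
    exact (ContinuousLinearMap.integral_comp_comm Complex.imCLM hf_int).symm
  constructor
  · -- first inequality
    rw [hre_int]
    calc |∫ x, (f x).re ∂σ| ≤ ∫ x, |(f x).re| ∂σ := by
          simpa [Real.norm_eq_abs] using norm_integral_le_integral_norm (fun x => (f x).re) (μ := σ)
    _ ≤ ∫ x, g x ∂σ := by
          apply integral_mono (hf_int.re.abs) hg_int
          intro x
          simp only [RCLike.re_to_complex]
          rw [hre x, hg_eq x, abs_div, abs_of_pos (hD x)]
          rw [div_le_div_iff₀ (hD x) (hsqD x)]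
          have h1 : |x - y| ≤ Real.sqrt ((x - y) ^ 2 + a ^ 2) := by
            rw [← Real.sqrt_sq_eq_abs]
            exact Real.sqrt_le_sqrt (by nlinarith)
          have h2 : Real.sqrt ((x - y) ^ 2 + a ^ 2) * Real.sqrt ((x - y) ^ 2 + a ^ 2)
              = (x - y) ^ 2 + a ^ 2 := Real.mul_self_sqrt (hD x).le
          calc |a * (x - y)| * Real.sqrt ((x - y) ^ 2 + a ^ 2)
              = |a| * |x - y| * Real.sqrt ((x - y) ^ 2 + a ^ 2) := by rw [abs_mul]
          _ ≤ |a| * Real.sqrt ((x - y) ^ 2 + a ^ 2) * Real.sqrt ((x - y) ^ 2 + a ^ 2) := by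
              apply mul_le_mul_of_nonneg_right _ (hsqD x).le
              exact mul_le_mul_of_nonneg_left h1 haabs.le
          _ = |a| * ((x - y) ^ 2 + a ^ 2) := by rw [mul_assoc, h2]
  · -- second inequality: Cauchy-Schwarz
    have him_nonneg : 0 ≤ ∫ x, (f x).im ∂σ :=
      integral_nonneg fun x => by rw [him x]; positivity
    rw [him_int, _root_.abs_of_nonneg him_nonneg]
    have hconj : (2:ℝ).HolderConjugate 2 := Real.HolderConjugate.two_two
    have hg_mem : MemLp g (ENNReal.ofReal 2) σ :=
      MemLp.of_bound hg_cont.aestronglyMeasurable 1 (ae_of_all _ hg_norm)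
    have h1_mem : MemLp (fun _ : ℝ => (1:ℝ)) (ENNReal.ofReal 2) σ := memLp_const 1
    have key := integral_mul_le_Lp_mul_Lq_of_nonneg hconj (ae_of_all _ hg_nonneg)
      (ae_of_all _ fun _ => zero_le_one) hg_mem h1_mem
    simp only [mul_one, Real.one_rpow] at key
    rw [integral_const, probReal_univ, smul_eq_mul, one_mul,
      Real.one_rpow, mul_one] at key
    calc ∫ x, g x ∂σ ≤ (∫ x, g x ^ (2:ℝ) ∂σ) ^ ((1:ℝ) / 2) := key
    _ = (∫ x, (f x).im ∂σ) ^ ((1:ℝ) / 2) := by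
        congr 1
        apply integral_congr_ae (ae_of_all _ fun x => ?_)
        rw [him x, ← hg_sq x, ← Real.rpow_natCast (g x) 2]
        norm_num
end

section
/- Let ψ : ℝ → ℝ be a continuously differentiable, positive, even function with ψ(0) = 1 such that x ↦ |ψ(x)| + (1 + |x|)·|ψ′(x)| is integrable on ℝ, let μ be a Borel probability measure on ℝ, and let 0 < α ≤ 1. Then sup over x ∈ ℝ and a > 0 of a^{−α}·(ψ_a * μ)(x) is finite if and only if d_μ^{α,∞} is finite. -/
open MeasureTheory Complex Set

/-- `d_μ^{α,∞} = sup_{x ∈ ℝ} sup_{ε > 0} μ((x−ε, x+ε))/(2ε)^α`. -/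
noncomputable def dAlpha (μ : Measure ℝ) (α : ℝ) : ENNReal :=
  ⨆ (x : ℝ) (ε : ℝ) (_ : 0 < ε),
    μ (Set.Ioo (x - ε) (x + ε)) / ENNReal.ofReal ((2 * ε) ^ α)

/-- `(ψ_a * μ)(x) = ∫ ψ((y − x)/a) dμ(y)`. -/
noncomputable def waveletConv (ψ : ℝ → ℝ) (a : ℝ) (μ : Measure ℝ) (x : ℝ) : ℝ :=
  ∫ y : ℝ, ψ ((y - x) / a) ∂μ

theorem stmt7 (ψ : ℝ → ℝ) (hψC1 : ContDiff ℝ 1 ψ) (hψpos : ∀ x, 0 < ψ x)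
    (hψeven : ∀ x, ψ (-x) = ψ x) (hψ0 : ψ 0 = 1)
    (hψint : MeasureTheory.Integrable (fun x => |ψ x| + (1 + |x|) * |deriv ψ x|))
    (μ : Measure ℝ) [IsProbabilityMeasure μ] (α : ℝ) (hα0 : 0 < α) (hα1 : α ≤ 1) :
    (∃ C : ℝ, ∀ (x : ℝ) (a : ℝ), 0 < a → a ^ (-α) * waveletConv ψ a μ x ≤ C) ↔
      dAlpha μ α ≠ ⊤ := by
  have hc : Continuous (deriv ψ) := hψC1.continuous_deriv le_rfl
  have key : ∀ x : ℝ, 0 ≤ (1 + |x|) * |deriv ψ x| := fun x => by positivity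
  -- basic integrability facts
  have h1 : Integrable ψ := by
    refine hψint.mono hψC1.continuous.aestronglyMeasurable (ae_of_all _ fun x => ?_)
    rw [Real.norm_eq_abs, Real.norm_eq_abs,
      _root_.abs_of_nonneg (by positivity : (0:ℝ) ≤ |ψ x| + (1 + |x|) * |deriv ψ x|)]
    exact le_add_of_nonneg_right (key x)
  have h2 : Integrable (fun x => (1 + |x|) * |deriv ψ x|) := by
    refine hψint.mono ((continuous_const.add _root_.continuous_abs).mul hc.abs).aestronglyMeasurable
      (ae_of_all _ fun x => ?_)
    rw [Real.norm_eq_abs, Real.norm_eq_abs, _root_.abs_of_nonneg (key x),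
      _root_.abs_of_nonneg (by positivity : (0:ℝ) ≤ |ψ x| + (1 + |x|) * |deriv ψ x|)]
    exact le_add_of_nonneg_left (_root_.abs_nonneg _)
  have h3 : Integrable (fun x => |deriv ψ x|) := by
    refine h2.mono hc.abs.aestronglyMeasurable (ae_of_all _ fun x => ?_)
    rw [Real.norm_eq_abs, Real.norm_eq_abs, _root_.abs_abs, _root_.abs_of_nonneg (key x)]
    nlinarith [_root_.abs_nonneg (deriv ψ x), _root_.abs_nonneg x]
  -- tail bound:  ψ u ≤ ∫_{Ioi u} |ψ'|
  have tail : ∀ u : ℝ, ψ u ≤ ∫ t in Ioi u, |deriv ψ t| := by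
    intro u
    refine le_of_forall_pos_le_add fun η hη => ?_
    obtain ⟨R, hRu, hRη⟩ : ∃ R, u < R ∧ ψ R ≤ η := by
      by_contra h
      push_neg at h
      have hmono : IntegrableOn (fun _ : ℝ => η) (Ioi u) := by
        refine (h1.integrableOn (s := Ioi u)).mono' aestronglyMeasurable_const
          ((ae_restrict_mem measurableSet_Ioi).mono fun x hx => ?_)
        rw [Real.norm_eq_abs, _root_.abs_of_pos hη]
        exact le_of_lt (h x hx)
      rw [integrableOn_const_iff] at hmono
      rcases hmono with h' | h'
      · exact absurd (enorm_eq_zero.mp h') (ne_of_gt hη)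
      · simp [Real.volume_Ioi] at h'
    have hftc : ∫ t in u..R, deriv ψ t = ψ R - ψ u :=
      intervalIntegral.integral_deriv_eq_sub
        (fun x _ => (hψC1.differentiable one_ne_zero).differentiableAt)
        (hc.intervalIntegrable u R)
    have habs : |∫ t in u..R, deriv ψ t| ≤ ∫ t in u..R, |deriv ψ t| :=
      intervalIntegral.abs_integral_le_integral_abs (le_of_lt hRu)
    have hsub : ∫ t in u..R, |deriv ψ t| ≤ ∫ t in Ioi u, |deriv ψ t| := by
      rw [intervalIntegral.integral_of_le (le_of_lt hRu)]
      refine setIntegral_mono_set (h3.integrableOn) (ae_of_all _ fun x => _root_.abs_nonneg _) ?_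
      exact HasSubset.Subset.eventuallyLE (Ioc_subset_Ioi_self)
    have := _root_.abs_le.mp habs
    linarith [this.1]
  -- evenness:  ψ v = ψ |v|
  have heq : ∀ v : ℝ, ψ v = ψ |v| := by
    intro v
    rcases le_or_gt 0 v with h | h
    · rw [_root_.abs_of_nonneg h]
    · rw [_root_.abs_of_neg h, ← hψeven v]
  -- global boundedness
  have hbd : ∀ v : ℝ, ψ v ≤ ∫ t : ℝ, |deriv ψ t| := by
    intro v
    calc ψ v = ψ |v| := heq v
      _ ≤ ∫ t in Ioi |v|, |deriv ψ t| := tail _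
      _ ≤ ∫ t : ℝ, |deriv ψ t| :=
          setIntegral_le_integral h3 (ae_of_all _ fun t => _root_.abs_nonneg _)
  constructor
  · -- sup finite → dAlpha finite
    rintro ⟨C, hC⟩
    obtain ⟨δ, hδ0, hδ⟩ : ∃ δ > 0, ∀ t : ℝ, |t| < δ → 1/2 ≤ ψ t := by
      have hcont : ContinuousAt ψ 0 := hψC1.continuous.continuousAt
      rw [Metric.continuousAt_iff] at hcont
      obtain ⟨δ, hδ0, hδ⟩ := hcont (1/2) (by norm_num)
      refine ⟨δ, hδ0, fun t ht => ?_⟩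
      have := hδ (x := t) (by simpa [Real.dist_eq] using ht)
      rw [Real.dist_eq, hψ0] at this
      have := _root_.abs_lt.mp this
      linarith [this.1]
    have hInt : ∀ (x a : ℝ), a ≠ 0 → Integrable (fun y => ψ ((y - x) / a)) μ := by
      intro x a ha
      refine Integrable.mono' (integrable_const (∫ t : ℝ, |deriv ψ t|))
        ((hψC1.continuous.comp
          ((continuous_id.sub continuous_const).div_const a)).aestronglyMeasurable)
        (ae_of_all _ fun y => ?_)
      rw [Real.norm_eq_abs, _root_.abs_of_pos (hψpos _)]
      exact hbd _
    have hsup : dAlpha μ α ≤ ENNReal.ofReal (2 * C / (2 * δ) ^ α) := by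
      refine iSup_le fun x => iSup_le fun ε => iSup_le fun hε => ?_
      set a : ℝ := ε / δ with haa
      have ha : 0 < a := div_pos hε hδ0
      have hlow : (1/2) * (μ (Ioo (x - ε) (x + ε))).toReal ≤ ∫ y : ℝ, ψ ((y - x) / a) ∂μ := by
        have step1 : ∫ y in Ioo (x - ε) (x + ε), (1/2 : ℝ) ∂μ ≤
            ∫ y in Ioo (x - ε) (x + ε), ψ ((y - x) / a) ∂μ := by
          refine setIntegral_mono_on ((integrableOn_const_iff (C := (1/2 : ℝ))).mpr (Or.inr (measure_lt_top μ _)))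
            ((hInt x a ha.ne').integrableOn) measurableSet_Ioo fun y hy => ?_
          apply hδ
          rw [mem_Ioo] at hy
          rw [_root_.abs_div, _root_.abs_of_pos ha, div_lt_iff₀ ha, haa,
            show δ * (ε / δ) = ε by field_simp]
          exact _root_.abs_sub_lt_iff.mpr ⟨by linarith [hy.2], by linarith [hy.1]⟩
        have step2 : ∫ y in Ioo (x - ε) (x + ε), ψ ((y - x) / a) ∂μ ≤
            ∫ y : ℝ, ψ ((y - x) / a) ∂μ :=
          setIntegral_le_integral (hInt x a ha.ne') (ae_of_all _ fun y => (hψpos _).le)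
        rw [setIntegral_const] at step1
        calc (1/2) * (μ (Ioo (x - ε) (x + ε))).toReal
            = (μ (Ioo (x - ε) (x + ε))).toReal • (1/2 : ℝ) := by rw [smul_eq_mul]; ring
          _ ≤ ∫ y in Ioo (x - ε) (x + ε), ψ ((y - x) / a) ∂μ := step1
          _ ≤ _ := step2
      have hup : ∫ y : ℝ, ψ ((y - x) / a) ∂μ ≤ C * a ^ α := by
        have := hC x a ha
        rw [waveletConv, Real.rpow_neg ha.le] at this
        have hposα : (0:ℝ) < a ^ α := Real.rpow_pos_of_pos ha α
        rw [inv_mul_le_iff₀ hposα] at this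
        linarith [this]
      have hμ : (μ (Ioo (x - ε) (x + ε))).toReal ≤ 2 * (C * a ^ α) := by linarith
      have hμ2 : μ (Ioo (x - ε) (x + ε)) ≤ ENNReal.ofReal (2 * (C * a ^ α)) := by
        rw [← ENNReal.ofReal_toReal (measure_ne_top μ _)]
        exact ENNReal.ofReal_le_ofReal hμ
      have hpow : (0:ℝ) < (2 * ε) ^ α := Real.rpow_pos_of_pos (by linarith) α
      calc μ (Ioo (x - ε) (x + ε)) / ENNReal.ofReal ((2 * ε) ^ α)
          ≤ ENNReal.ofReal (2 * (C * a ^ α)) / ENNReal.ofReal ((2 * ε) ^ α) :=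
            ENNReal.div_le_div_right hμ2 _
        _ = ENNReal.ofReal (2 * (C * a ^ α) / (2 * ε) ^ α) :=
            (ENNReal.ofReal_div_of_pos hpow).symm
        _ = ENNReal.ofReal (2 * C / (2 * δ) ^ α) := by
            congr 1
            have hεα : (0:ℝ) < ε ^ α := Real.rpow_pos_of_pos hε α
            have hδα : (0:ℝ) < δ ^ α := Real.rpow_pos_of_pos hδ0 α
            have h2α : (0:ℝ) < (2:ℝ) ^ α := Real.rpow_pos_of_pos (by norm_num) α
            rw [haa, Real.div_rpow hε.le hδ0.le, Real.mul_rpow (by norm_num) hε.le,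
              Real.mul_rpow (by norm_num) hδ0.le]
            field_simp
    exact (lt_of_le_of_lt hsup ENNReal.ofReal_lt_top).ne
  · -- dAlpha finite → sup finite
    intro hD
    refine ⟨(dAlpha μ α).toReal * 2 ^ α * ∫ s : ℝ, (1 + |s|) * |deriv ψ s|, fun x a ha => ?_⟩
    set D := (dAlpha μ α).toReal with hDdef
    set K := ∫ s : ℝ, (1 + |s|) * |deriv ψ s| with hKdef
    have hDnn : 0 ≤ D := ENNReal.toReal_nonneg
    set g : ℝ → ENNReal := fun s => ENNReal.ofReal |deriv ψ s| with hg
    have hmeas : AEStronglyMeasurable (fun y => ψ ((y - x) / a)) μ :=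
      (hψC1.continuous.comp
        ((continuous_id.sub continuous_const).div_const a)).aestronglyMeasurable
    have R1 : waveletConv ψ a μ x
        = (∫⁻ y, ENNReal.ofReal (ψ ((y - x) / a)) ∂μ).toReal :=
      integral_eq_lintegral_of_nonneg_ae (ae_of_all _ fun y => (hψpos _).le) hmeas
    have R2 : ∀ y : ℝ, ENNReal.ofReal (ψ ((y - x) / a)) ≤
        ∫⁻ s in Ioi (0:ℝ), (Ioi (|y - x| / a)).indicator g s := by
      intro y
      set b := |y - x| / a with hb
      have hb0 : 0 ≤ b := div_nonneg (_root_.abs_nonneg _) ha.le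
      have he : ψ ((y - x) / a) = ψ b := by
        rw [heq ((y - x) / a), hb, _root_.abs_div, _root_.abs_of_pos ha]
      have h2' : ENNReal.ofReal (ψ b) ≤ ∫⁻ t in Ioi b, g t := by
        calc ENNReal.ofReal (ψ b) ≤ ENNReal.ofReal (∫ t in Ioi b, |deriv ψ t|) :=
              ENNReal.ofReal_le_ofReal (tail b)
          _ = ∫⁻ t in Ioi b, g t := by
              rw [ofReal_integral_eq_lintegral_ofReal h3.integrableOn
                (ae_of_all _ fun t => _root_.abs_nonneg _)]
      have h3' : (∫⁻ t in Ioi b, g t) = ∫⁻ s in Ioi (0:ℝ), (Ioi b).indicator g s := by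
        rw [← lintegral_indicator measurableSet_Ioi g, ← lintegral_indicator measurableSet_Ioi,
          Set.indicator_indicator, Set.inter_eq_right.mpr (Ioi_subset_Ioi hb0)]
      rw [he]
      exact h2'.trans_eq h3'
    have step1 : (∫⁻ y, ENNReal.ofReal (ψ ((y - x) / a)) ∂μ) ≤
        ∫⁻ y, (∫⁻ s in Ioi (0:ℝ), (Ioi (|y - x| / a)).indicator g s) ∂μ :=
      lintegral_mono R2
    have R3 : (∫⁻ y, (∫⁻ s in Ioi (0:ℝ), (Ioi (|y - x| / a)).indicator g s) ∂μ)
        = ∫⁻ s in Ioi (0:ℝ), (∫⁻ y, (Ioi (|y - x| / a)).indicator g s ∂μ) := by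
      apply lintegral_lintegral_swap
      have : (Function.uncurry fun (y s : ℝ) => (Ioi (|y - x| / a)).indicator g s) =
          {p : ℝ × ℝ | |p.1 - x| / a < p.2}.indicator (fun p => g p.2) := by
        funext p
        simp only [Function.uncurry, Set.indicator_apply, mem_Ioi, mem_setOf_eq]
      rw [this]
      exact ((Measurable.indicator
        ((ENNReal.measurable_ofReal.comp (hc.abs.measurable.comp measurable_snd)))
        (measurableSet_lt (((measurable_fst.sub measurable_const).abs).div_const a)
          measurable_snd))).aemeasurable
    have R4 : ∀ s : ℝ, 0 < s → (∫⁻ y, (Ioi (|y - x| / a)).indicator g s ∂μ)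
        = g s * μ (Ioo (x - a * s) (x + a * s)) := by
      intro s hs
      have hind : ∀ y : ℝ, (Ioi (|y - x| / a)).indicator g s
          = (Ioo (x - a * s) (x + a * s)).indicator (fun _ => g s) y := by
        intro y
        have hiff : (|y - x| / a < s) ↔ (y ∈ Ioo (x - a * s) (x + a * s)) := by
          rw [div_lt_iff₀ ha, mem_Ioo, _root_.abs_sub_lt_iff]
          constructor <;> intro h <;> constructor <;> linarith [h.1, h.2]
        simp only [Set.indicator_apply, mem_Ioi]
        by_cases h : |y - x| / a < s
        · rw [if_pos h, if_pos (hiff.mp h)]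
        · rw [if_neg h, if_neg (fun hy => h (hiff.mpr hy))]
      calc (∫⁻ y, (Ioi (|y - x| / a)).indicator g s ∂μ)
          = ∫⁻ y, (Ioo (x - a * s) (x + a * s)).indicator (fun _ => g s) y ∂μ :=
            lintegral_congr hind
        _ = ∫⁻ _ in Ioo (x - a * s) (x + a * s), g s ∂μ :=
            lintegral_indicator measurableSet_Ioo _
        _ = g s * μ (Ioo (x - a * s) (x + a * s)) := by rw [setLIntegral_const]
    have R5 : ∀ ε : ℝ, 0 < ε → μ (Ioo (x - ε) (x + ε)) ≤ ENNReal.ofReal (D * (2 * ε) ^ α) := by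
      intro ε hε
      have hle : μ (Ioo (x - ε) (x + ε)) / ENNReal.ofReal ((2 * ε) ^ α) ≤ dAlpha μ α :=
        le_iSup_of_le x (le_iSup_of_le ε (le_iSup_of_le hε le_rfl))
      have hpow : (0:ℝ) < (2 * ε) ^ α := Real.rpow_pos_of_pos (by linarith) α
      have hne : ENNReal.ofReal ((2 * ε) ^ α) ≠ 0 := by
        simp [ENNReal.ofReal_eq_zero, not_le, hpow]
      rw [ENNReal.div_le_iff hne ENNReal.ofReal_ne_top] at hle
      calc μ (Ioo (x - ε) (x + ε)) ≤ dAlpha μ α * ENNReal.ofReal ((2 * ε) ^ α) := hle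
        _ = ENNReal.ofReal D * ENNReal.ofReal ((2 * ε) ^ α) := by
            rw [ENNReal.ofReal_toReal hD]
        _ = ENNReal.ofReal (D * (2 * ε) ^ α) := (ENNReal.ofReal_mul hDnn).symm
    have R6 : (∫⁻ s in Ioi (0:ℝ), g s * μ (Ioo (x - a * s) (x + a * s)))
        ≤ ENNReal.ofReal ((D * (2 * a) ^ α) * K) := by
      have hbound : ∀ s ∈ Ioi (0:ℝ), g s * μ (Ioo (x - a * s) (x + a * s))
          ≤ ENNReal.ofReal ((D * (2 * a) ^ α) * ((1 + |s|) * |deriv ψ s|)) := by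
        intro s hs
        rw [mem_Ioi] at hs
        have has : 0 < a * s := mul_pos ha hs
        calc g s * μ (Ioo (x - a * s) (x + a * s))
            ≤ ENNReal.ofReal |deriv ψ s| * ENNReal.ofReal (D * (2 * (a * s)) ^ α) :=
              mul_le_mul_right (R5 (a * s) has) _
          _ = ENNReal.ofReal (|deriv ψ s| * (D * (2 * (a * s)) ^ α)) :=
              (ENNReal.ofReal_mul (_root_.abs_nonneg _)).symm
          _ ≤ ENNReal.ofReal ((D * (2 * a) ^ α) * ((1 + |s|) * |deriv ψ s|)) := by
              apply ENNReal.ofReal_le_ofReal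
              have hsplit : (2 * (a * s)) ^ α = (2 * a) ^ α * s ^ α := by
                rw [show (2:ℝ) * (a * s) = (2 * a) * s by ring,
                  Real.mul_rpow (by linarith) hs.le]
              have hsα : s ^ α ≤ 1 + |s| := by
                rcases le_or_gt s 1 with h | h
                · have : s ^ α ≤ 1 := Real.rpow_le_one hs.le h hα0.le
                  have := _root_.abs_nonneg s
                  linarith
                · have h1' : s ^ α ≤ s ^ (1:ℝ) :=
                    Real.rpow_le_rpow_of_exponent_le h.le hα1
                  rw [Real.rpow_one] at h1'
                  rw [_root_.abs_of_pos hs]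
                  linarith
              rw [hsplit]
              have h2a : (0:ℝ) ≤ (2 * a) ^ α := (Real.rpow_pos_of_pos (by linarith) α).le
              nlinarith [_root_.abs_nonneg (deriv ψ s), mul_le_mul_of_nonneg_left hsα
                (mul_nonneg (mul_nonneg hDnn h2a) (_root_.abs_nonneg (deriv ψ s)))]
      calc (∫⁻ s in Ioi (0:ℝ), g s * μ (Ioo (x - a * s) (x + a * s)))
          ≤ ∫⁻ s in Ioi (0:ℝ),
              ENNReal.ofReal ((D * (2 * a) ^ α) * ((1 + |s|) * |deriv ψ s|)) :=
            setLIntegral_mono_ae (by fun_prop) (ae_of_all _ hbound)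
        _ = ENNReal.ofReal (∫ s in Ioi (0:ℝ), (D * (2 * a) ^ α) * ((1 + |s|) * |deriv ψ s|)) := by
            rw [ofReal_integral_eq_lintegral_ofReal ((h2.integrableOn).const_mul _)
              (ae_of_all _ fun s => by positivity)]
        _ ≤ ENNReal.ofReal ((D * (2 * a) ^ α) * K) := by
            apply ENNReal.ofReal_le_ofReal
            rw [integral_const_mul]
            apply mul_le_mul_of_nonneg_left _ (by positivity)
            exact setIntegral_le_integral h2 (ae_of_all _ fun s => by positivity)
    have keyL : (∫⁻ y, ENNReal.ofReal (ψ ((y - x) / a)) ∂μ) ≤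
        ENNReal.ofReal ((D * (2 * a) ^ α) * K) := by
      refine step1.trans (le_trans (le_of_eq R3) ?_)
      refine le_trans (le_of_eq ?_) R6
      exact setLIntegral_congr_fun measurableSet_Ioi (fun s hs => R4 s hs)
    have hWle : waveletConv ψ a μ x ≤ (D * (2 * a) ^ α) * K := by
      rw [R1]
      exact ENNReal.toReal_le_of_le_ofReal (by positivity) keyL
    have hinv : a ^ (-α) * a ^ α = 1 := by
      rw [← Real.rpow_add ha]; simp
    calc a ^ (-α) * waveletConv ψ a μ x
        ≤ a ^ (-α) * ((D * (2 * a) ^ α) * K) :=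
          mul_le_mul_of_nonneg_left hWle (Real.rpow_nonneg ha.le _)
      _ = D * 2 ^ α * K := by
          rw [Real.mul_rpow (by norm_num) ha.le,
            show a ^ (-α) * (D * (2 ^ α * a ^ α) * K) = (a ^ (-α) * a ^ α) * (D * 2 ^ α * K)
              by ring,
            hinv, one_mul]
end

section
/- Let ψ : ℝ → ℝ be a continuously differentiable, positive, even function with ψ(0) = 1 such that x ↦ |ψ(x)| + (1 + |x|)·|ψ′(x)| is integrable on ℝ, let μ be a Borel probability measure on ℝ, let 0 < α ≤ 1, let a > 0 and x ∈ ℝ. Then a^{−α}·(ψ_a * μ)(x) = −∫₀^∞ ψ′(y)·(2y)^α · [μ((x − ay, x + ay))/(2ay)^α] dy. -/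
open MeasureTheory Complex Set Filter Topology

theorem stmt8 (ψ : ℝ → ℝ) (hψC1 : ContDiff ℝ 1 ψ) (hψpos : ∀ x, 0 < ψ x)
    (hψeven : ∀ x, ψ (-x) = ψ x) (hψ0 : ψ 0 = 1)
    (hψint : MeasureTheory.Integrable (fun x => |ψ x| + (1 + |x|) * |deriv ψ x|))
    (μ : Measure ℝ) [IsProbabilityMeasure μ] (α : ℝ) (hα0 : 0 < α) (hα1 : α ≤ 1)
    (a : ℝ) (ha : 0 < a) (x : ℝ) :
    a ^ (-α) * waveletConv ψ a μ x =
      -∫ y in Set.Ioi (0 : ℝ),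
        deriv ψ y * (2 * y) ^ α *
          ((μ (Set.Ioo (x - a * y) (x + a * y))).toReal / (2 * a * y) ^ α) := by
  set ψ' := deriv ψ with hψ'def
  have hcont : Continuous ψ := hψC1.continuous
  have hcont' : Continuous ψ' := hψC1.continuous_deriv le_rfl
  have hdiff : Differentiable ℝ ψ := hψC1.differentiable one_ne_zero
  have hInt' : Integrable ψ' := by
    refine hψint.mono' hcont'.aestronglyMeasurable (Filter.Eventually.of_forall fun z => ?_)
    have h1 : |ψ' z| ≤ (1 + |z|) * |ψ' z| := by nlinarith [abs_nonneg z, abs_nonneg (ψ' z)]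
    have h2 : (0:ℝ) ≤ |ψ z| := abs_nonneg _
    simpa [Real.norm_eq_abs] using by linarith
  have hIntψ : Integrable ψ := by
    refine hψint.mono' hcont.aestronglyMeasurable (Filter.Eventually.of_forall fun z => ?_)
    have : (0:ℝ) ≤ (1 + |z|) * |ψ' z| := by positivity
    simpa [Real.norm_eq_abs] using by linarith
  -- ψ tends to a limit L at +∞
  set L : ℝ := ψ 0 + ∫ y in Set.Ioi (0:ℝ), ψ' y with hLdef
  have htendL : Tendsto ψ atTop (𝓝 L) := by
    have h1 : ∀ t : ℝ, ∫ y in (0:ℝ)..t, ψ' y = ψ t - ψ 0 := fun t =>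
      intervalIntegral.integral_deriv_eq_sub (fun u _ => hdiff u) (hcont'.intervalIntegrable 0 t)
    have h2 : Tendsto (fun t : ℝ => ∫ y in (0:ℝ)..t, ψ' y) atTop
        (𝓝 (∫ y in Set.Ioi (0:ℝ), ψ' y)) :=
      intervalIntegral_tendsto_integral_Ioi 0 hInt'.integrableOn tendsto_id
    have h3 := h2.const_add (ψ 0)
    refine h3.congr fun t => ?_
    rw [h1 t]; ring
  -- the limit is 0
  have hL0 : L = 0 := by
    by_contra hL
    have hLnonneg : 0 ≤ L := ge_of_tendsto' htendL fun t => (hψpos t).le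
    have hLpos : 0 < L := lt_of_le_of_ne hLnonneg (Ne.symm hL)
    have hev : ∀ᶠ t in atTop, L / 2 < ψ t :=
      htendL.eventually (eventually_gt_nhds (by linarith))
    obtain ⟨T, hT⟩ := eventually_atTop.mp hev
    have hconst : IntegrableOn (fun _ : ℝ => L / 2) (Set.Ici T) := by
      refine Integrable.mono' hIntψ.integrableOn aestronglyMeasurable_const ?_
      rw [ae_restrict_iff' measurableSet_Ici]
      refine Filter.Eventually.of_forall fun t ht => ?_
      have := hT t ht
      rw [Real.norm_eq_abs, abs_of_pos (by linarith)]
      linarith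
    rw [integrableOn_const_iff] at hconst
    rcases hconst with h | h
    · simp at h; linarith
    · simp [Real.volume_Ici] at h
  have htend0 : Tendsto ψ atTop (𝓝 0) := hL0 ▸ htendL
  -- key FTC identity
  have key : ∀ t : ℝ, ∫ y in Set.Ioi t, ψ' y = -ψ t := by
    intro t
    have := integral_Ioi_of_hasDerivAt_of_tendsto' (f := ψ) (f' := ψ') (a := t)
      (fun u _ => (hdiff u).hasDerivAt) hInt'.integrableOn htend0
    simpa using this
  -- pointwise identity for each z
  have keyz : ∀ z : ℝ, ψ ((z - x) / a) =
      -∫ y in Set.Ioi (0:ℝ), (Set.Ioi (|z - x| / a)).indicator ψ' y := by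
    intro z
    have ht0 : 0 ≤ |z - x| / a := by positivity
    have habs : ψ ((z - x) / a) = ψ (|z - x| / a) := by
      rw [show |z - x| / a = |(z - x) / a| by rw [abs_div, abs_of_pos ha]]
      rcases abs_cases ((z - x) / a) with ⟨h, _⟩ | ⟨h, _⟩
      · rw [h]
      · rw [h, hψeven]
    rw [habs, setIntegral_indicator measurableSet_Ioi, Set.Ioi_inter_Ioi,
      sup_eq_right.mpr ht0, key]
    ring
  -- integrability on the product
  have hFeq : (fun p : ℝ × ℝ => (Set.Ioi (|p.1 - x| / a)).indicator ψ' p.2)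
      = Set.indicator {p : ℝ × ℝ | |p.1 - x| < a * p.2} (fun p => ψ' p.2) := by
    funext p
    have hiff : |p.1 - x| / a < p.2 ↔ |p.1 - x| < a * p.2 := by
      rw [div_lt_iff₀ ha, mul_comm]
    simp [Set.indicator_apply, Set.mem_Ioi, Set.mem_setOf_eq, hiff]
  have hSopen : IsOpen {p : ℝ × ℝ | |p.1 - x| < a * p.2} :=
    isOpen_lt ((continuous_fst.sub continuous_const).abs) (continuous_const.mul continuous_snd)
  have hFint : Integrable (fun p : ℝ × ℝ => (Set.Ioi (|p.1 - x| / a)).indicator ψ' p.2)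
      (μ.prod (volume.restrict (Set.Ioi 0))) := by
    have hmeas : AEStronglyMeasurable
        (fun p : ℝ × ℝ => (Set.Ioi (|p.1 - x| / a)).indicator ψ' p.2)
        (μ.prod (volume.restrict (Set.Ioi 0))) := by
      rw [hFeq]
      exact (((hcont'.comp continuous_snd).stronglyMeasurable).indicator
        hSopen.measurableSet).aestronglyMeasurable
    refine Integrable.mono' (g := fun p : ℝ × ℝ => |ψ' p.2|) ?_ hmeas
      (Filter.Eventually.of_forall fun p => ?_)
    · have h1 : Integrable (fun _ : ℝ => (1:ℝ)) μ := integrable_const 1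
      have h2 : Integrable (fun y => |ψ' y|) (volume.restrict (Set.Ioi 0)) :=
        (hInt'.norm).restrict
      simpa using h1.mul_prod h2
    · simpa [Real.norm_eq_abs] using norm_indicator_le_norm_self (s := Set.Ioi (|p.1 - x| / a)) ψ' p.2
  -- swap the order of integration
  have hswap : ∫ z, (∫ y in Set.Ioi (0:ℝ), (Set.Ioi (|z - x| / a)).indicator ψ' y) ∂μ
      = ∫ y in Set.Ioi (0:ℝ), (∫ z, (Set.Ioi (|z - x| / a)).indicator ψ' y ∂μ) :=
    integral_integral_swap hFint
  -- inner integral evaluation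
  have hinner : ∀ y ∈ Set.Ioi (0:ℝ),
      (∫ z, (Set.Ioi (|z - x| / a)).indicator ψ' y ∂μ)
        = ψ' y * (μ (Set.Ioo (x - a * y) (x + a * y))).toReal := by
    intro y hy
    have hy' : (0:ℝ) < y := hy
    have hfun : (fun z => (Set.Ioi (|z - x| / a)).indicator ψ' y)
        = (Set.Ioo (x - a * y) (x + a * y)).indicator (fun _ => ψ' y) := by
      funext z
      have hiff : |z - x| / a < y ↔ (x - a * y < z ∧ z < x + a * y) := by
        rw [div_lt_iff₀ ha, abs_lt]
        constructor <;> rintro ⟨h1, h2⟩ <;> constructor <;> nlinarith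
      simp [Set.indicator_apply, Set.mem_Ioi, Set.mem_Ioo, hiff]
    rw [hfun, integral_indicator measurableSet_Ioo, setIntegral_const, smul_eq_mul, mul_comm, measureReal_def]
  -- main intermediate identity
  have hmain : waveletConv ψ a μ x
      = -∫ y in Set.Ioi (0:ℝ), ψ' y * (μ (Set.Ioo (x - a * y) (x + a * y))).toReal := by
    unfold waveletConv
    rw [integral_congr_ae (Filter.Eventually.of_forall fun z => keyz z), integral_neg, hswap,
      setIntegral_congr_fun measurableSet_Ioi hinner]
  -- final algebraic manipulation
  have hR : ∫ y in Set.Ioi (0:ℝ),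
        ψ' y * (2 * y) ^ α * ((μ (Set.Ioo (x - a * y) (x + a * y))).toReal / (2 * a * y) ^ α)
      = ∫ y in Set.Ioi (0:ℝ),
        a ^ (-α) * (ψ' y * (μ (Set.Ioo (x - a * y) (x + a * y))).toReal) := by
    refine setIntegral_congr_fun measurableSet_Ioi fun y hy => ?_
    have hy' : (0:ℝ) < y := hy
    have h2y : (0:ℝ) < 2 * y := by linarith
    have hrw : (2 * a * y : ℝ) ^ α = a ^ α * (2 * y) ^ α := by
      rw [show (2 * a * y : ℝ) = a * (2 * y) by ring, Real.mul_rpow ha.le h2y.le]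
    rw [hrw, Real.rpow_neg ha.le]
    have hne : (2 * y : ℝ) ^ α ≠ 0 := (Real.rpow_pos_of_pos h2y α).ne'
    have hane : (a : ℝ) ^ α ≠ 0 := (Real.rpow_pos_of_pos ha α).ne'
    field_simp
  rw [hmain, hR, integral_const_mul]
  ring
end

section
/- Let ψ : ℝ → ℝ be a continuously differentiable, positive, even function with ψ(0) = 1 such that x ↦ |ψ(x)| + (1 + |x|)·|ψ′(x)| is integrable on ℝ, let 0 < α ≤ 1, and let μ be a Borel probability measure on ℝ with d_μ^{α,∞} < ∞. Then for all x ∈ ℝ and a > 0, a^{−α}·(ψ_a * μ)(x) ≤ d_μ^{α,∞} · ∫₀^∞ |ψ′(y)|·(2y)^α dy. -/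
open MeasureTheory Complex Set

open Filter

variable {ψ : ℝ → ℝ}

lemma psi_integrable (hψC1 : ContDiff ℝ 1 ψ)
    (hψint : Integrable (fun x => |ψ x| + (1 + |x|) * |deriv ψ x|)) :
    Integrable ψ := by
  refine hψint.mono hψC1.continuous.aestronglyMeasurable ?_
  filter_upwards with t
  have h1 : 0 ≤ (1 + |t|) * |deriv ψ t| := by positivity
  rw [Real.norm_eq_abs, Real.norm_eq_abs,
    _root_.abs_of_nonneg (show (0:ℝ) ≤ |ψ t| + (1 + |t|) * |deriv ψ t| by positivity)]
  linarith

lemma dpsi_integrable (hψC1 : ContDiff ℝ 1 ψ)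
    (hψint : Integrable (fun x => |ψ x| + (1 + |x|) * |deriv ψ x|)) :
    Integrable (deriv ψ) := by
  refine hψint.mono (hψC1.continuous_deriv le_rfl).aestronglyMeasurable ?_
  filter_upwards with t
  rw [Real.norm_eq_abs, Real.norm_eq_abs,
    _root_.abs_of_nonneg (show (0:ℝ) ≤ |ψ t| + (1 + |t|) * |deriv ψ t| by positivity)]
  nlinarith [abs_nonneg t, abs_nonneg (deriv ψ t), abs_nonneg (ψ t)]

lemma psi_tendsto_zero (hψC1 : ContDiff ℝ 1 ψ) (hψpos : ∀ x, 0 < ψ x)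
    (hψint : Integrable (fun x => |ψ x| + (1 + |x|) * |deriv ψ x|)) :
    Tendsto ψ atTop (nhds 0) := by
  have hInt := dpsi_integrable hψC1 hψint
  have hT : Tendsto ψ atTop (nhds (ψ 0 + ∫ t in Ioi (0:ℝ), deriv ψ t)) := by
    have h1 : Tendsto (fun b => ∫ t in (0:ℝ)..b, deriv ψ t) atTop
        (nhds (∫ t in Ioi (0:ℝ), deriv ψ t)) :=
      intervalIntegral_tendsto_integral_Ioi 0 hInt.integrableOn tendsto_id
    have h2 := h1.const_add (ψ 0)
    refine h2.congr fun b => ?_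
    rw [intervalIntegral.integral_deriv_eq_sub
      (fun t _ => (hψC1.differentiable one_ne_zero) t)
      ((hψC1.continuous_deriv le_rfl).intervalIntegrable 0 b)]
    ring
  have hL0 : ψ 0 + ∫ t in Ioi (0:ℝ), deriv ψ t = 0 := by
    set L := ψ 0 + ∫ t in Ioi (0:ℝ), deriv ψ t with hLdef
    by_contra h
    have hLnn : 0 ≤ L := ge_of_tendsto' hT fun b => (hψpos b).le
    have hLpos : 0 < L := lt_of_le_of_ne hLnn (Ne.symm h)
    have hev : ∀ᶠ b in atTop, L / 2 < ψ b :=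
      hT.eventually (eventually_gt_nhds (half_lt_self hLpos))
    obtain ⟨M, hM⟩ := hev.exists_forall_of_atTop
    have hcint : Integrable (fun _ : ℝ => L / 2) (volume.restrict (Ici M)) := by
      refine Integrable.mono' ((psi_integrable hψC1 hψint).integrableOn)
        aestronglyMeasurable_const ?_
      refine (ae_restrict_iff' measurableSet_Ici).2 (Eventually.of_forall fun b hb => ?_)
      rw [Real.norm_eq_abs, _root_.abs_of_nonneg (by linarith)]
      exact (hM b hb).le
    rw [integrable_const_iff] at hcint
    rcases hcint with h' | h'
    · exact absurd h' (by positivity)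
    · rw [isFiniteMeasure_restrict, Real.volume_Ici] at h'
      exact absurd h' (by simp)
  rwa [hL0] at hT

lemma psi_le_tail (hψC1 : ContDiff ℝ 1 ψ) (hψpos : ∀ x, 0 < ψ x)
    (hψint : Integrable (fun x => |ψ x| + (1 + |x|) * |deriv ψ x|)) (u : ℝ) :
    ψ u ≤ ∫ t in Ioi u, |deriv ψ t| := by
  have hInt := dpsi_integrable hψC1 hψint
  have key : ∫ t in Ioi u, deriv ψ t = 0 - ψ u :=
    integral_Ioi_of_hasDerivAt_of_tendsto'
      (fun t _ => ((hψC1.differentiable one_ne_zero) t).hasDerivAt)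
      hInt.integrableOn (psi_tendsto_zero hψC1 hψpos hψint)
  have h1 : ψ u = -(∫ t in Ioi u, deriv ψ t) := by rw [key]; ring
  rw [h1]
  calc -(∫ t in Ioi u, deriv ψ t) ≤ |∫ t in Ioi u, deriv ψ t| := neg_le_abs _
    _ ≤ ∫ t in Ioi u, |deriv ψ t| := by
        simpa [Real.norm_eq_abs] using
          norm_integral_le_integral_norm (μ := volume.restrict (Ioi u)) (deriv ψ)

theorem stmt9 (ψ : ℝ → ℝ) (hψC1 : ContDiff ℝ 1 ψ) (hψpos : ∀ x, 0 < ψ x)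
    (hψeven : ∀ x, ψ (-x) = ψ x) (hψ0 : ψ 0 = 1)
    (hψint : MeasureTheory.Integrable (fun x => |ψ x| + (1 + |x|) * |deriv ψ x|))
    (α : ℝ) (hα0 : 0 < α) (hα1 : α ≤ 1)
    (μ : Measure ℝ) [IsProbabilityMeasure μ] (hμ : dAlpha μ α ≠ ⊤)
    (x : ℝ) (a : ℝ) (ha : 0 < a) :
    a ^ (-α) * waveletConv ψ a μ x ≤
      (dAlpha μ α).toReal * ∫ y in Set.Ioi (0 : ℝ), |deriv ψ y| * (2 * y) ^ α := by
  classical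
  set g : ℝ → ℝ := fun t => |deriv ψ t| with hgdef
  have hgmeas : Measurable g := (measurable_deriv ψ).abs
  have hgnn : ∀ t, 0 ≤ g t := fun t => abs_nonneg _
  have hgint : Integrable g := (dpsi_integrable hψC1 hψint).abs
  set d : ENNReal := dAlpha μ α with hd
  set I : ℝ := ∫ y in Set.Ioi (0 : ℝ), g y * (2 * y) ^ α with hI
  -- integrability of RHS integrand
  have hIint : IntegrableOn (fun t => g t * (2 * t) ^ α) (Ioi 0) := by
    have hbig : Integrable (fun t : ℝ => 2 * ((1 + |t|) * g t)) := by
      have := hψint.sub (psi_integrable hψC1 hψint).abs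
      simpa using this.const_mul 2
    refine (hbig.integrableOn).mono' ?_ ?_
    · exact (hgmeas.mul ((measurable_const.mul measurable_id').pow_const α)).aestronglyMeasurable
    · refine (ae_restrict_iff' measurableSet_Ioi).2 (Eventually.of_forall fun t ht => ?_)
      have ht0 : 0 < t := ht
      have hr : (2 * t) ^ α ≤ 1 + 2 * t := by
        rcases le_or_gt (2 * t) 1 with h | h
        · have := Real.rpow_le_one (by linarith) h hα0.le
          linarith
        · calc (2 * t) ^ α ≤ (2 * t) ^ (1:ℝ) :=
                Real.rpow_le_rpow_of_exponent_le h.le hα1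
            _ = 2 * t := Real.rpow_one _
            _ ≤ 1 + 2 * t := by linarith
      have hrnn : 0 ≤ (2 * t) ^ α := Real.rpow_nonneg (by linarith) α
      rw [Real.norm_eq_abs, _root_.abs_of_nonneg (mul_nonneg (hgnn t) hrnn)]
      have habs : |t| = t := _root_.abs_of_pos ht0
      nlinarith [hgnn t, mul_le_mul_of_nonneg_left hr (hgnn t)]
  have hInn : 0 ≤ I := by
    refine setIntegral_nonneg measurableSet_Ioi fun t ht => ?_
    exact mul_nonneg (hgnn t) (Real.rpow_nonneg (by nlinarith [ht.out]) α)
  -- the per-y bound as a lintegral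
  set F : ℝ → ℝ → ENNReal := fun y t =>
    if |y - x| < a * t then ENNReal.ofReal (g t) else 0 with hF
  have step2 : ∀ y : ℝ,
      ENNReal.ofReal (ψ ((y - x) / a)) ≤ ∫⁻ t in Ioi (0:ℝ), F y t := by
    intro y
    set r : ℝ := |y - x| / a with hr
    have hrnn : 0 ≤ r := div_nonneg (abs_nonneg _) ha.le
    have hpsi : ψ ((y - x) / a) ≤ ∫ t in Ioi r, g t := by
      have heq : ψ ((y - x) / a) = ψ r := by
        rcases abs_cases (y - x) with ⟨h1, _⟩ | ⟨h1, _⟩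
        · rw [hr, h1]
        · rw [hr, h1, neg_div, hψeven]
      rw [heq]
      exact psi_le_tail hψC1 hψpos hψint r
    calc ENNReal.ofReal (ψ ((y - x) / a)) ≤ ENNReal.ofReal (∫ t in Ioi r, g t) :=
          ENNReal.ofReal_le_ofReal hpsi
      _ = ∫⁻ t in Ioi r, ENNReal.ofReal (g t) :=
          ofReal_integral_eq_lintegral_ofReal hgint.integrableOn
            (Eventually.of_forall fun t => hgnn t)
      _ = ∫⁻ t in Ioi (0:ℝ), F y t := by
          have hFeq : F y = (Ioi r).indicator (fun t => ENNReal.ofReal (g t)) := by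
            funext t
            simp only [hF, Set.indicator_apply, mem_Ioi]
            congr 1
            simp [hr, div_lt_iff₀ ha, mul_comm]
          rw [hFeq, lintegral_indicator measurableSet_Ioi,
            Measure.restrict_restrict measurableSet_Ioi, Ioi_inter_Ioi,
            sup_eq_left.2 hrnn]
  -- measurability of F for Tonelli
  have hFmeas : Measurable (Function.uncurry F) := by
    have hset : MeasurableSet {p : ℝ × ℝ | |p.1 - x| < a * p.2} := by
      apply measurableSet_lt
      · exact ((measurable_fst.sub measurable_const).abs)
      · exact measurable_snd.const_mul a
    exact Measurable.ite hset
      (ENNReal.measurable_ofReal.comp (hgmeas.comp measurable_snd)) measurable_const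
  -- inner integral bound for fixed t > 0
  have step4 : ∀ t ∈ Ioi (0:ℝ),
      (∫⁻ y, F y t ∂μ) ≤ ENNReal.ofReal (g t) * (d * ENNReal.ofReal ((2 * (a * t)) ^ α)) := by
    intro t ht
    have ht0 : 0 < t := ht
    have hateps : 0 < a * t := by positivity
    have hIoo : {y : ℝ | |y - x| < a * t} = Ioo (x - a * t) (x + a * t) := by
      ext y
      simp only [mem_setOf_eq, mem_Ioo, abs_sub_lt_iff]
      constructor <;> intro h <;> constructor <;> linarith [h.1, h.2]
    have hFy : (fun y => F y t) =
        {y : ℝ | |y - x| < a * t}.indicator (fun _ => ENNReal.ofReal (g t)) := by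
      funext y
      simp [hF, Set.indicator_apply]
    have hμbound : μ (Ioo (x - a * t) (x + a * t)) ≤ d * ENNReal.ofReal ((2 * (a * t)) ^ α) := by
      have hle : μ (Ioo (x - a * t) (x + a * t)) / ENNReal.ofReal ((2 * (a * t)) ^ α) ≤ d := by
        rw [hd, dAlpha]
        refine le_trans ?_ (le_iSup _ x)
        refine le_trans ?_ (le_iSup _ (a * t))
        exact le_iSup (fun _ : 0 < a * t =>
          μ (Ioo (x - a * t) (x + a * t)) / ENNReal.ofReal ((2 * (a * t)) ^ α)) hateps
      have hne : ENNReal.ofReal ((2 * (a * t)) ^ α) ≠ 0 := by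
        simp only [ne_eq, ENNReal.ofReal_eq_zero, not_le]
        exact Real.rpow_pos_of_pos (by linarith) α
      exact (ENNReal.div_le_iff hne ENNReal.ofReal_ne_top).1 hle
    calc (∫⁻ y, F y t ∂μ)
        = ENNReal.ofReal (g t) * μ {y : ℝ | |y - x| < a * t} := by
          rw [hFy, lintegral_indicator (by rw [hIoo]; exact measurableSet_Ioo),
            setLIntegral_const]
      _ ≤ ENNReal.ofReal (g t) * (d * ENNReal.ofReal ((2 * (a * t)) ^ α)) := by
          rw [hIoo]
          exact mul_le_mul_right hμbound _
  -- total lintegral bound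
  have hnonneg : ∀ᵐ y ∂μ, 0 ≤ ψ ((y - x) / a) := Eventually.of_forall fun y => (hψpos _).le
  have hcontcomp : Continuous fun y : ℝ => ψ ((y - x) / a) :=
    hψC1.continuous.comp (by continuity)
  have hwc : waveletConv ψ a μ x =
      (∫⁻ y, ENNReal.ofReal (ψ ((y - x) / a)) ∂μ).toReal := by
    rw [waveletConv, integral_eq_lintegral_of_nonneg_ae hnonneg
      hcontcomp.aestronglyMeasurable]
  have hchain : (∫⁻ y, ENNReal.ofReal (ψ ((y - x) / a)) ∂μ) ≤
      d * ENNReal.ofReal (a ^ α * I) := by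
    calc (∫⁻ y, ENNReal.ofReal (ψ ((y - x) / a)) ∂μ)
        ≤ ∫⁻ y, (∫⁻ t in Ioi (0:ℝ), F y t) ∂μ := lintegral_mono step2
      _ = ∫⁻ t in Ioi (0:ℝ), (∫⁻ y, F y t ∂μ) :=
          lintegral_lintegral_swap hFmeas.aemeasurable
      _ ≤ ∫⁻ t in Ioi (0:ℝ),
            ENNReal.ofReal (g t) * (d * ENNReal.ofReal ((2 * (a * t)) ^ α)) :=
          lintegral_mono_ae ((ae_restrict_iff' measurableSet_Ioi).2
            (Eventually.of_forall step4))
      _ = ∫⁻ t in Ioi (0:ℝ),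
            d * ENNReal.ofReal (a ^ α) * ENNReal.ofReal (g t * (2 * t) ^ α) := by
          refine setLIntegral_congr_fun measurableSet_Ioi
            (fun t ht => ?_)
          have ht0 : (0:ℝ) < t := ht
          have h2t : (0:ℝ) ≤ 2 * t := by linarith
          have heq : (2 * (a * t)) ^ α = a ^ α * (2 * t) ^ α := by
            rw [show 2 * (a * t) = a * (2 * t) by ring, Real.mul_rpow ha.le h2t]
          rw [heq, ENNReal.ofReal_mul (Real.rpow_nonneg ha.le α),
            ENNReal.ofReal_mul (hgnn t)]
          ring
      _ = d * ENNReal.ofReal (a ^ α) * ∫⁻ t in Ioi (0:ℝ),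
            ENNReal.ofReal (g t * (2 * t) ^ α) := by
          rw [lintegral_const_mul' _ _ (by
            exact ENNReal.mul_ne_top hμ ENNReal.ofReal_ne_top)]
      _ = d * ENNReal.ofReal (a ^ α) * ENNReal.ofReal I := by
          rw [hI, ofReal_integral_eq_lintegral_ofReal hIint
            ((ae_restrict_iff' measurableSet_Ioi).2 (Eventually.of_forall fun t ht =>
              mul_nonneg (hgnn t) (Real.rpow_nonneg (by nlinarith [ht.out]) α)))]
      _ = d * ENNReal.ofReal (a ^ α * I) := by
          rw [ENNReal.ofReal_mul (Real.rpow_nonneg ha.le α), mul_assoc]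
  have hRne : d * ENNReal.ofReal (a ^ α * I) ≠ ⊤ :=
    ENNReal.mul_ne_top hμ ENNReal.ofReal_ne_top
  have hwcle : waveletConv ψ a μ x ≤ (d * ENNReal.ofReal (a ^ α * I)).toReal := by
    rw [hwc]
    exact ENNReal.toReal_mono hRne hchain
  have hRtoReal : (d * ENNReal.ofReal (a ^ α * I)).toReal = d.toReal * (a ^ α * I) := by
    rw [ENNReal.toReal_mul, ENNReal.toReal_ofReal
      (mul_nonneg (Real.rpow_nonneg ha.le α) hInn)]
  have hma : (0:ℝ) ≤ a ^ (-α) := Real.rpow_nonneg ha.le _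
  have hcancel : a ^ (-α) * a ^ α = 1 := by
    rw [← Real.rpow_add ha]
    simp
  calc a ^ (-α) * waveletConv ψ a μ x
      ≤ a ^ (-α) * (d.toReal * (a ^ α * I)) := by
        rw [← hRtoReal]
        exact mul_le_mul_of_nonneg_left hwcle hma
    _ = (a ^ (-α) * a ^ α) * (d.toReal * I) := by ring
    _ = d.toReal * I := by rw [hcancel, one_mul]
end

section
/- Let 0 < α ≤ 1 and let μ be a Borel probability measure on ℝ. Then sup over z ∈ ℂ with Im z ≠ 0 of |Im z|^{1−α} · |Im F_μ(z)| is finite if and only if d_μ^{α,∞} is finite. -/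
open MeasureTheory Complex Set

lemma denom_pos {y : ℝ} (hy : y ≠ 0) (u : ℝ) : 0 < u ^ 2 + y ^ 2 := by positivity

lemma cont_poisson (a y c : ℝ) (hy : y ≠ 0) :
    Continuous (fun x : ℝ => c / ((x - a) ^ 2 + y ^ 2)) := by
  apply continuous_const.div (by continuity)
  intro x; exact (denom_pos hy _).ne'

lemma integrable_poisson (μ : Measure ℝ) [IsFiniteMeasure μ] (a y c : ℝ) (hy : y ≠ 0) :
    Integrable (fun x : ℝ => c / ((x - a) ^ 2 + y ^ 2)) μ := by
  apply Integrable.mono' (integrable_const (|c| / y ^ 2))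
    ((cont_poisson a y c hy).aestronglyMeasurable)
  filter_upwards with x
  rw [Real.norm_eq_abs, abs_div, abs_of_pos (denom_pos hy _)]
  apply div_le_div_of_nonneg_left (abs_nonneg c) (by positivity)
  nlinarith [sq_nonneg (x - a)]

lemma integrable_inv_sub (μ : Measure ℝ) [IsFiniteMeasure μ] (z : ℂ) (hz : z.im ≠ 0) :
    Integrable (fun x : ℝ => ((x : ℂ) - z)⁻¹) μ := by
  have hcont : Continuous (fun x : ℝ => ((x : ℂ) - z)⁻¹) := by
    apply (continuous_ofReal.sub continuous_const).inv₀
    intro x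
    intro h
    apply hz
    have : ((x : ℂ) - z).im = 0 := by rw [show ((x:ℂ) - z) = 0 from h]; simp
    simpa using this.symm
  apply Integrable.mono' (integrable_const (|z.im|⁻¹)) hcont.aestronglyMeasurable
  filter_upwards with x
  rw [norm_inv]
  apply inv_anti₀ (abs_pos.mpr hz)
  calc |z.im| = |((x:ℂ) - z).im| := by simp
    _ ≤ ‖(x:ℂ) - z‖ := Complex.abs_im_le_norm _

lemma im_borelTransform (μ : Measure ℝ) [IsFiniteMeasure μ] (z : ℂ) (hz : z.im ≠ 0) :
    (borelTransform μ z).im = ∫ x : ℝ, z.im / ((x - z.re) ^ 2 + z.im ^ 2) ∂μ := by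
  have h := integral_im (𝕜 := ℂ) (integrable_inv_sub μ z hz)
  simp only [RCLike.im_to_complex] at h
  rw [borelTransform, ← h]
  congr 1
  ext x
  rw [Complex.inv_im, Complex.normSq_apply]
  simp only [Complex.sub_re, Complex.sub_im, Complex.ofReal_re, Complex.ofReal_im]
  ring

lemma forward_dir (α : ℝ) (hα0 : 0 < α) (hα1 : α ≤ 1)
    (μ : Measure ℝ) [IsProbabilityMeasure μ]
    (C : ℝ) (hC : ∀ z : ℂ, z.im ≠ 0 →
        |z.im| ^ (1 - α) * |(borelTransform μ z).im| ≤ C) :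
    dAlpha μ α ≠ ⊤ := by
  have hC0 : 0 ≤ C := le_trans (by positivity) (hC Complex.I (by simp))
  have key : ∀ a ε : ℝ, 0 < ε →
      μ (Set.Ioo (a - ε) (a + ε)) ≤ ENNReal.ofReal (2 * C * ε ^ α) := by
    intro a ε hε
    set z : ℂ := ⟨a, ε⟩ with hzdef
    have hzim : z.im = ε := rfl
    have hzre : z.re = a := rfl
    have hz : z.im ≠ 0 := by rw [hzim]; exact hε.ne'
    have him := im_borelTransform μ z hz
    rw [hzim, hzre] at him
    -- the integrand
    set f : ℝ → ℝ := fun x => ε / ((x - a) ^ 2 + ε ^ 2) with hf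
    have hf_nonneg : ∀ x, 0 ≤ f x := fun x => by positivity
    have hint : Integrable f μ := integrable_poisson μ a ε ε hε.ne'
    -- lower bound of integral by set integral
    have h1 : ∫ x in Set.Ioo (a - ε) (a + ε), (2 * ε)⁻¹ ∂μ ≤ ∫ x in Set.Ioo (a - ε) (a + ε), f x ∂μ := by
      apply setIntegral_mono_on (integrableOn_const (measure_lt_top _ _).ne)
        hint.integrableOn measurableSet_Ioo
      intro x hx
      show (2 * ε)⁻¹ ≤ ε / ((x - a) ^ 2 + ε ^ 2)
      have hd : 0 < (x - a) ^ 2 + ε ^ 2 := by positivity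
      rw [div_eq_mul_inv]
      have hx1 : a - ε < x := hx.1
      have hx2 : x < a + ε := hx.2
      have h1 : (x - a) ^ 2 + ε ^ 2 ≤ 2 * ε ^ 2 := by nlinarith
      calc (2 * ε)⁻¹ = ε * (2 * ε ^ 2)⁻¹ := by field_simp
        _ ≤ ε * ((x - a) ^ 2 + ε ^ 2)⁻¹ := by
            apply mul_le_mul_of_nonneg_left (inv_anti₀ hd h1) hε.le
    have h2 : ∫ x in Set.Ioo (a - ε) (a + ε), f x ∂μ ≤ ∫ x, f x ∂μ :=
      setIntegral_le_integral hint (Filter.Eventually.of_forall hf_nonneg)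
    have h3 : (μ (Set.Ioo (a - ε) (a + ε))).toReal * (2 * ε)⁻¹ ≤ ∫ x, f x ∂μ := by
      calc (μ (Set.Ioo (a - ε) (a + ε))).toReal * (2 * ε)⁻¹
          = ∫ x in Set.Ioo (a - ε) (a + ε), (2 * ε)⁻¹ ∂μ := by
            rw [setIntegral_const]; simp [smul_eq_mul]; exact Or.inl rfl
        _ ≤ _ := h1.trans h2
    -- bound ∫ f via hC
    have h4 : ∫ x, f x ∂μ ≤ C * ε ^ (α - 1) := by
      have := hC z hz
      rw [← him] at h3 ⊢
      rw [hzim, abs_of_pos hε] at this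
      have himnn : 0 ≤ (borelTransform μ z).im := by
        rw [him]; exact integral_nonneg hf_nonneg
      rw [_root_.abs_of_nonneg himnn] at this
      have hεpow : 0 < ε ^ (1 - α) := Real.rpow_pos_of_pos hε _
      calc (borelTransform μ z).im ≤ C / ε ^ (1-α) :=
            (le_div_iff₀ hεpow).mpr (by rw [mul_comm]; exact this)
        _ = C * ε ^ (α - 1) := by
            rw [div_eq_mul_inv, ← Real.rpow_neg hε.le]
            ring_nf
    have h5 : (μ (Set.Ioo (a - ε) (a + ε))).toReal ≤ 2 * C * ε ^ α := by
      have h := h3.trans h4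
      have h2ε : (0:ℝ) < 2 * ε := by positivity
      rw [← div_eq_mul_inv, div_le_iff₀ h2ε] at h
      have heq : C * ε ^ (α-1) * (2*ε) = 2 * C * ε ^ α := by
        have : ε ^ α = ε ^ (α-1) * ε := by
          rw [← Real.rpow_add_one hε.ne']; norm_num
        rw [this]; ring
      linarith
    calc μ (Set.Ioo (a - ε) (a + ε)) = ENNReal.ofReal ((μ (Set.Ioo (a - ε) (a + ε))).toReal) := by
          rw [ENNReal.ofReal_toReal (measure_lt_top _ _).ne]
      _ ≤ _ := ENNReal.ofReal_le_ofReal h5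
  have hbound : dAlpha μ α ≤ ENNReal.ofReal (2 * C) := by
    rw [dAlpha]
    refine iSup_le fun a => iSup_le fun ε => iSup_le fun hε => ?_
    have hb0 : ENNReal.ofReal ((2 * ε) ^ α) ≠ 0 := by
      simp only [ne_eq, ENNReal.ofReal_eq_zero, not_le]
      positivity
    rw [ENNReal.div_le_iff hb0 ENNReal.ofReal_ne_top]
    calc μ (Set.Ioo (a - ε) (a + ε)) ≤ ENNReal.ofReal (2 * C * ε ^ α) := key a ε hε
      _ ≤ ENNReal.ofReal (2 * C) * ENNReal.ofReal ((2 * ε) ^ α) := by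
          rw [← ENNReal.ofReal_mul (by positivity)]
          apply ENNReal.ofReal_le_ofReal
          have h2a : (2 * ε) ^ α = 2 ^ α * ε ^ α := Real.mul_rpow (by norm_num) hε.le
          have h1le : (1:ℝ) ≤ 2 ^ α := Real.one_le_rpow (by norm_num) hα0.le
          have hεα : (0:ℝ) < ε ^ α := Real.rpow_pos_of_pos hε _
          rw [h2a]
          nlinarith [le_mul_of_one_le_right (mul_nonneg hC0 hεα.le) h1le]
  exact ne_top_of_le_ne_top ENNReal.ofReal_ne_top hbound

lemma meas_bound (μ : Measure ℝ) (α : ℝ) (hα0 : 0 < α) (a ε : ℝ) (hε : 0 < ε) :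
    μ (Set.Ioo (a - ε) (a + ε)) ≤ dAlpha μ α * ENNReal.ofReal ((2 * ε) ^ α) := by
  have hb0 : ENNReal.ofReal ((2 * ε) ^ α) ≠ 0 := by
    simp only [ne_eq, ENNReal.ofReal_eq_zero, not_le]; positivity
  rw [← ENNReal.div_le_iff hb0 ENNReal.ofReal_ne_top]
  calc μ (Set.Ioo (a - ε) (a + ε)) / ENNReal.ofReal ((2 * ε) ^ α)
      ≤ ⨆ (_ : 0 < ε), μ (Set.Ioo (a - ε) (a + ε)) / ENNReal.ofReal ((2 * ε) ^ α) :=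
        le_iSup (fun _ : 0 < ε => _) hε
    _ ≤ ⨆ (ε' : ℝ) (_ : 0 < ε'), μ (Set.Ioo (a - ε') (a + ε')) / ENNReal.ofReal ((2 * ε') ^ α) :=
        le_iSup (fun ε' : ℝ => ⨆ (_ : 0 < ε'), μ (Set.Ioo (a - ε') (a + ε')) / ENNReal.ofReal ((2 * ε') ^ α)) ε
    _ ≤ dAlpha μ α := le_iSup (fun x : ℝ => ⨆ (ε' : ℝ) (_ : 0 < ε'), μ (Set.Ioo (x - ε') (x + ε')) / ENNReal.ofReal ((2 * ε') ^ α)) a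

lemma rpow_lintegral (p T : ℝ) (hp : -1 < p) (hp1 : p < 0) (hT : 0 < T) :
    ∫⁻ t in Set.Ioo (0:ℝ) T, ENNReal.ofReal (t ^ p) = ENNReal.ofReal (T ^ (p+1) / (p+1)) := by
  have hp1' : (0:ℝ) < p + 1 := by linarith
  have hint : IntegrableOn (fun t : ℝ => t ^ p) (Set.Ioo 0 T) := by
    have := (intervalIntegral.intervalIntegrable_rpow' (a := 0) (b := T) hp)
    rw [intervalIntegrable_iff, Set.uIoc_of_le hT.le] at this
    exact this.mono_set Set.Ioo_subset_Ioc_self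
  have hnn : 0 ≤ᵐ[volume.restrict (Set.Ioo (0:ℝ) T)] fun t : ℝ => t ^ p := by
    filter_upwards [ae_restrict_mem measurableSet_Ioo] with t ht
    exact Real.rpow_nonneg ht.1.le _
  rw [← ofReal_integral_eq_lintegral_ofReal hint hnn]
  congr 1
  rw [← integral_Ioc_eq_integral_Ioo, ← intervalIntegral.integral_of_le hT.le,
    integral_rpow (Or.inl hp)]
  rw [Real.zero_rpow hp1'.ne']
  ring

lemma backward_dir (α : ℝ) (hα0 : 0 < α) (hα1 : α ≤ 1)
    (μ : Measure ℝ) [IsProbabilityMeasure μ] (hM : dAlpha μ α ≠ ⊤) :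
    ∃ C : ℝ, ∀ z : ℂ, z.im ≠ 0 →
      |z.im| ^ (1 - α) * |(borelTransform μ z).im| ≤ C := by
  set M := dAlpha μ α with hMdef
  have hhalf : (0:ℝ) < 1 - α / 2 := by linarith
  refine ⟨M.toReal * 2 ^ α / (1 - α / 2), fun z hz => ?_⟩
  set a := z.re
  set y := z.im
  set Y := |y| with hYdef
  have hY : 0 < Y := abs_pos.mpr hz
  set f : ℝ → ℝ := fun x => Y / ((x - a) ^ 2 + y ^ 2) with hf
  have hyY : y ^ 2 = Y ^ 2 := (_root_.sq_abs y).symm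
  have hd : ∀ x : ℝ, 0 < (x - a) ^ 2 + y ^ 2 := fun x => denom_pos hz _
  have hf_nonneg : ∀ x, 0 ≤ f x := fun x => div_nonneg hY.le (hd x).le
  have hf_cont : Continuous f := cont_poisson a y Y hz
  -- step 1 : |Im F| ≤ ∫ f
  have step1 : |(borelTransform μ z).im| ≤ ∫ x, f x ∂μ := by
    rw [im_borelTransform μ z hz]
    calc |∫ x, y / ((x - a) ^ 2 + y ^ 2) ∂μ|
        = ‖∫ x, y / ((x - a) ^ 2 + y ^ 2) ∂μ‖ := (Real.norm_eq_abs _).symm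
      _ ≤ ∫ x, ‖y / ((x - a) ^ 2 + y ^ 2)‖ ∂μ := norm_integral_le_integral_norm _
      _ = ∫ x, f x ∂μ := by
          congr 1; ext x
          rw [Real.norm_eq_abs, abs_div, abs_of_pos (hd x)]
  -- step 2 : pass to lintegral
  have step2 : ∫ x, f x ∂μ = (∫⁻ x, ENNReal.ofReal (f x) ∂μ).toReal :=
    integral_eq_lintegral_of_nonneg_ae (Filter.Eventually.of_forall hf_nonneg)
      hf_cont.aestronglyMeasurable
  -- step 3 : layer cake
  have step3 : ∫⁻ x, ENNReal.ofReal (f x) ∂μ = ∫⁻ t in Set.Ioi (0:ℝ), μ {x | t < f x} :=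
    lintegral_eq_lintegral_meas_lt μ (Filter.Eventually.of_forall hf_nonneg)
      hf_cont.measurable.aemeasurable
  set T : ℝ := 1 / Y with hT
  have hT0 : 0 < T := by positivity
  set c : ℝ := 2 ^ α * Y ^ (α / 2) with hc
  have hc0 : 0 < c := by positivity
  -- step 4 : pointwise bound of the distribution function
  have step4 : ∀ t ∈ Set.Ioi (0:ℝ), μ {x | t < f x} ≤
      (Set.Ioo 0 T).indicator (fun t => M * ENNReal.ofReal (c * t ^ (-(α/2)))) t := by
    intro t ht
    rw [Set.mem_Ioi] at ht
    by_cases htT : t < T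
    · rw [Set.indicator_of_mem (by exact ⟨ht, htT⟩)]
      set r : ℝ := (Y / t) ^ ((1:ℝ)/2) with hr
      have hYt : 0 < Y / t := by positivity
      have hr0 : 0 < r := Real.rpow_pos_of_pos hYt _
      have hr2 : r ^ (2:ℕ) = Y / t := by
        rw [hr, ← Real.rpow_natCast ((Y / t) ^ ((1:ℝ)/2)) 2, ← Real.rpow_mul hYt.le]
        norm_num
      have hsub : {x | t < f x} ⊆ Set.Ioo (a - r) (a + r) := by
        intro x hx
        rw [Set.mem_setOf_eq] at hx
        have hx' : t * ((x - a) ^ 2 + y ^ 2) < Y := (lt_div_iff₀ (hd x)).mp hx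
        have hxd : (x - a) ^ 2 + y ^ 2 < Y / t := by
          rw [lt_div_iff₀ ht]; nlinarith
        have hx2 : (x - a) ^ 2 < r ^ 2 := by
          rw [hr2]
          nlinarith [sq_nonneg y]
        constructor <;> nlinarith
      calc μ {x | t < f x} ≤ μ (Set.Ioo (a - r) (a + r)) := measure_mono hsub
        _ ≤ M * ENNReal.ofReal ((2 * r) ^ α) := meas_bound μ α hα0 a r hr0
        _ = M * ENNReal.ofReal (c * t ^ (-(α/2))) := by
            congr 2
            rw [Real.mul_rpow (by norm_num) hr0.le, hr, ← Real.rpow_mul hYt.le,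
              Real.div_rpow hY.le ht.le, hc]
            rw [div_eq_mul_inv, ← Real.rpow_neg ht.le]
            ring_nf
    · rw [Set.indicator_of_notMem (fun hmem => htT hmem.2)]
      have hempty : {x | t < f x} = ∅ := by
        apply Set.eq_empty_of_forall_notMem
        intro x hx
        rw [Set.mem_setOf_eq] at hx
        have h1 : f x ≤ Y / Y ^ 2 :=
          div_le_div_of_nonneg_left hY.le (by positivity) (by nlinarith [sq_nonneg (x - a)])
        have h2 : Y / Y ^ 2 = T := by rw [hT, pow_two]; field_simp
        push_neg at htT
        linarith
      rw [hempty, measure_empty]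
  -- step 5 : bound the outer lintegral
  have hmbl : Measurable ((Set.Ioo (0:ℝ) T).indicator
      (fun t => M * ENNReal.ofReal (c * t ^ (-(α/2))))) := by
    apply Measurable.indicator _ measurableSet_Ioo
    fun_prop
  have step5 : ∫⁻ t in Set.Ioi (0:ℝ), μ {x | t < f x} ≤
      M * ENNReal.ofReal c * ENNReal.ofReal (T ^ (1 - α/2) / (1 - α/2)) := by
    calc ∫⁻ t in Set.Ioi (0:ℝ), μ {x | t < f x}
        ≤ ∫⁻ t in Set.Ioi (0:ℝ), (Set.Ioo 0 T).indicator
            (fun t => M * ENNReal.ofReal (c * t ^ (-(α/2)))) t :=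
          setLIntegral_mono hmbl step4
      _ ≤ ∫⁻ t, (Set.Ioo 0 T).indicator
            (fun t => M * ENNReal.ofReal (c * t ^ (-(α/2)))) t :=
          setLIntegral_le_lintegral _ _
      _ = ∫⁻ t in Set.Ioo (0:ℝ) T, M * ENNReal.ofReal (c * t ^ (-(α/2))) := by
          rw [lintegral_indicator measurableSet_Ioo]
      _ = M * ENNReal.ofReal c * ∫⁻ t in Set.Ioo (0:ℝ) T, ENNReal.ofReal (t ^ (-(α/2))) := by
          simp_rw [ENNReal.ofReal_mul hc0.le, ← mul_assoc]
          rw [lintegral_const_mul' _ _ (ENNReal.mul_ne_top hM ENNReal.ofReal_ne_top)]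
      _ = M * ENNReal.ofReal c * ENNReal.ofReal (T ^ (1 - α/2) / (1 - α/2)) := by
          rw [rpow_lintegral (-(α/2)) T (by linarith) (by linarith) hT0,
            show -(α/2) + 1 = 1 - α/2 by ring]
  -- step 7 : back to real numbers
  have h7 : ∫ x, f x ∂μ ≤ M.toReal * c * (T ^ (1 - α/2) / (1 - α/2)) := by
    rw [step2, step3]
    calc (∫⁻ t in Set.Ioi (0:ℝ), μ {x | t < f x}).toReal
        ≤ (M * ENNReal.ofReal c * ENNReal.ofReal (T ^ (1 - α/2) / (1 - α/2))).toReal :=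
          ENNReal.toReal_mono
            (ENNReal.mul_ne_top (ENNReal.mul_ne_top hM ENNReal.ofReal_ne_top)
              ENNReal.ofReal_ne_top) step5
      _ = M.toReal * c * (T ^ (1 - α/2) / (1 - α/2)) := by
          rw [ENNReal.toReal_mul, ENNReal.toReal_mul, ENNReal.toReal_ofReal hc0.le,
            ENNReal.toReal_ofReal (by positivity)]
  -- final combination
  have hTe : T ^ (1 - α/2) = Y ^ (α/2 - 1) := by
    rw [hT, one_div, ← Real.rpow_neg_one Y, ← Real.rpow_mul hY.le,
      show (-1 : ℝ) * (1 - α/2) = α/2 - 1 by ring]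
  have hprod : Y ^ (1-α) * (Y ^ (α/2) * Y ^ (α/2 - 1)) = 1 := by
    rw [← Real.rpow_add hY, ← Real.rpow_add hY,
      show (α/2 + (α/2 - 1)) = α - 1 by ring,
      show (1 - α + (α - 1)) = 0 by ring, Real.rpow_zero]
  calc Y ^ (1-α) * |(borelTransform μ z).im|
      ≤ Y ^ (1-α) * (M.toReal * c * (T ^ (1 - α/2) / (1 - α/2))) :=
        mul_le_mul_of_nonneg_left (step1.trans h7) (Real.rpow_nonneg hY.le _)
    _ = M.toReal * 2 ^ α / (1 - α/2) := by
        rw [hTe, hc]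
        linear_combination (M.toReal * 2 ^ α / (1 - α/2)) * hprod

theorem stmt11 (α : ℝ) (hα0 : 0 < α) (hα1 : α ≤ 1)
    (μ : Measure ℝ) [IsProbabilityMeasure μ] :
    (∃ C : ℝ, ∀ z : ℂ, z.im ≠ 0 →
        |z.im| ^ (1 - α) * |(borelTransform μ z).im| ≤ C) ↔
      dAlpha μ α ≠ ⊤ := by
  constructor
  · rintro ⟨C, hC⟩
    exact forward_dir α hα0 hα1 μ C hC
  · intro h
    exact backward_dir α hα0 hα1 μ h
end

section
/- Let 0 < α ≤ 1 and let μ be a Borel probability measure on ℝ with d_μ^{α,∞} < ∞. Then for every z ∈ ℂ with Im z ≠ 0, |Im z|^{1−α} · |Im F_μ(z)| ≤ 2^α · π · d_μ^{α,∞}. -/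
open MeasureTheory Complex Set

theorem stmt12 (α : ℝ) (hα0 : 0 < α) (hα1 : α ≤ 1)
    (μ : Measure ℝ) [IsProbabilityMeasure μ] (hμ : dAlpha μ α ≠ ⊤)
    (z : ℂ) (hz : z.im ≠ 0) :
    |z.im| ^ (1 - α) * |(borelTransform μ z).im| ≤
      2 ^ α * Real.pi * (dAlpha μ α).toReal := by
  set a := z.re with ha
  set y := z.im with hy
  set c := |y| with hcdef
  have hc : 0 < c := abs_pos.mpr hz
  set d := dAlpha μ α with hd
  -- the function g
  set g : ℝ → ℝ := fun x => c / ((x - a) ^ 2 + c ^ 2) with hg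
  have hden : ∀ x : ℝ, 0 < (x - a) ^ 2 + c ^ 2 := fun x => by positivity
  have hgnn : ∀ x, 0 ≤ g x := fun x => div_nonneg hc.le (hden x).le
  have hgle : ∀ x, g x ≤ c⁻¹ := by
    intro x
    rw [hg]
    have h1 : c ^ 2 ≤ (x - a) ^ 2 + c ^ 2 := by nlinarith [sq_nonneg (x - a)]
    calc c / ((x - a) ^ 2 + c ^ 2) ≤ c / c ^ 2 :=
          div_le_div_of_nonneg_left hc.le (by positivity) h1
      _ = c⁻¹ := by field_simp
  have hgcont : Continuous g := by
    apply continuous_const.div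
    · fun_prop
    · intro x; exact (hden x).ne'
  -- imaginary part of the integrand
  have him : ∀ x : ℝ, (((x : ℂ) - z)⁻¹).im = y / ((x - a) ^ 2 + y ^ 2) := by
    intro x
    rw [Complex.inv_im]
    have h1 : ((x : ℂ) - z).im = -y := by simp [hy]
    have h2 : Complex.normSq ((x : ℂ) - z) = (x - a) ^ 2 + y ^ 2 := by
      rw [Complex.normSq_apply]; simp; ring
    rw [h1, h2]; ring
  have habs : ∀ x : ℝ, |(((x : ℂ) - z)⁻¹).im| = g x := by
    intro x
    have hy2 : y ^ 2 = c ^ 2 := (_root_.sq_abs y).symm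
    rw [him x, hy2, abs_div, _root_.abs_of_pos (hden x), ← hcdef]
  -- integrability of the integrand
  have hfcont : Continuous (fun x : ℝ => ((x : ℂ) - z)⁻¹) := by
    apply Continuous.inv₀ (by fun_prop)
    intro x
    intro h
    apply hz
    have := congrArg Complex.im h
    simpa using this.symm
  have hfbd : ∀ x : ℝ, ‖((x : ℂ) - z)⁻¹‖ ≤ c⁻¹ := by
    intro x
    rw [norm_inv]
    have h1 : c ≤ ‖(x : ℂ) - z‖ := by
      have := Complex.abs_im_le_norm ((x : ℂ) - z)
      simpa [hcdef, hy] using this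
    exact inv_anti₀ hc h1
  have hfint : Integrable (fun x : ℝ => ((x : ℂ) - z)⁻¹) μ :=
    Integrable.mono' (integrable_const c⁻¹) hfcont.aestronglyMeasurable
      (Filter.Eventually.of_forall hfbd)
  have hgint : Integrable g μ :=
    Integrable.mono' (integrable_const c⁻¹) hgcont.aestronglyMeasurable
      (Filter.Eventually.of_forall fun x => by rw [Real.norm_eq_abs, _root_.abs_of_nonneg (hgnn x)]; exact hgle x)
  -- step 1 : |Im F| ≤ ∫ g
  have step1 : |(borelTransform μ z).im| ≤ ∫ x, g x ∂μ := by
    have hI := integral_im (𝕜 := ℂ) hfint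
    simp only [RCLike.im_to_complex] at hI
    rw [borelTransform, ← hI]
    calc |∫ x, (((x : ℂ) - z)⁻¹).im ∂μ| ≤ ∫ x, |(((x : ℂ) - z)⁻¹).im| ∂μ := by
          simpa only [Real.norm_eq_abs] using norm_integral_le_integral_norm (fun x : ℝ => (((x : ℂ) - z)⁻¹).im) (μ := μ)
      _ = ∫ x, g x ∂μ := by congr 1; ext x; exact habs x
  -- step 2: layer cake bound
  have hd2 : (0:ℝ) < 1 - α / 2 := by linarith
  set K : ℝ := 2 ^ α * c ^ (α / 2) with hK
  have hK0 : 0 < K := by positivity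
  set T : ℝ := c⁻¹ with hT
  have hT0 : 0 < T := by positivity
  set J : ℝ := T ^ (1 - α / 2) / (1 - α / 2) with hJ
  have hJ0 : 0 ≤ K * J := by positivity
  have hmeasb : ∀ t ∈ Ioi (0:ℝ), μ {x | t < g x} ≤
      (Ioo (0:ℝ) T).indicator (fun t => d * ENNReal.ofReal (K * t ^ (-(α/2)))) t := by
    intro t ht
    simp only [mem_Ioi] at ht
    by_cases htT : t < T
    · rw [indicator_of_mem (mem_Ioo.mpr ⟨ht, htT⟩)]
      have hpos : 0 < c / t - c ^ 2 := by
        rw [sub_pos, lt_div_iff₀ ht]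
        calc c ^ 2 * t < c ^ 2 * T := mul_lt_mul_of_pos_left htT (by positivity)
          _ = c := by rw [hT]; field_simp
      set r : ℝ := Real.sqrt (c / t - c ^ 2) with hr
      have hr0 : 0 < r := Real.sqrt_pos.mpr hpos
      have hr2 : r ^ 2 = c / t - c ^ 2 := Real.sq_sqrt hpos.le
      have hset : {x | t < g x} = Ioo (a - r) (a + r) := by
        ext x
        simp only [mem_setOf_eq, mem_Ioo, hg]
        constructor
        · intro h
          have h2 : t * ((x - a) ^ 2 + c ^ 2) < c := by
            rw [lt_div_iff₀ (hden x)] at h; linarith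
          have h3 : (x - a) ^ 2 < r ^ 2 := by
            rw [hr2, lt_sub_iff_add_lt, lt_div_iff₀ ht]
            linarith
          have h4 : |x - a| < r := by
            have h5 := Real.sqrt_lt_sqrt (sq_nonneg (x - a)) h3
            rwa [Real.sqrt_sq_eq_abs, Real.sqrt_sq hr0.le] at h5
          obtain ⟨h5, h6⟩ := abs_lt.mp h4
          exact ⟨by linarith, by linarith⟩
        · rintro ⟨h1, h2⟩
          have h3 : (x - a) ^ 2 < r ^ 2 := sq_lt_sq' (by linarith) (by linarith)
          rw [hr2] at h3
          have h5 : (x - a) ^ 2 + c ^ 2 < c / t := by linarith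
          rw [lt_div_iff₀ (hden x)]
          calc t * ((x - a) ^ 2 + c ^ 2) < t * (c / t) :=
                mul_lt_mul_of_pos_left h5 ht
            _ = c := by field_simp
      rw [hset]
      have h2r0 : (0:ℝ) < (2 * r) ^ α := Real.rpow_pos_of_pos (by linarith) α
      have hdle : μ (Ioo (a - r) (a + r)) / ENNReal.ofReal ((2 * r) ^ α) ≤ d := by
        rw [hd, dAlpha]
        exact le_iSup_of_le a (le_iSup_of_le r (le_iSup_of_le hr0 le_rfl))
      have hμr : μ (Ioo (a - r) (a + r)) ≤ d * ENNReal.ofReal ((2 * r) ^ α) :=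
        (ENNReal.div_le_iff_le_mul
          (Or.inl (by simp [ENNReal.ofReal_eq_zero, not_le, h2r0]))
          (Or.inl ENNReal.ofReal_ne_top)).mp hdle
      refine hμr.trans (mul_le_mul_right (ENNReal.ofReal_le_ofReal ?_) d)
      have hrle : r ≤ Real.sqrt (c / t) := Real.sqrt_le_sqrt (by nlinarith [sq_nonneg c])
      calc (2 * r) ^ α ≤ (2 * Real.sqrt (c / t)) ^ α :=
            Real.rpow_le_rpow (by linarith) (by linarith) hα0.le
        _ = K * t ^ (-(α/2)) := by
            rw [Real.mul_rpow (by norm_num) (Real.sqrt_nonneg _), Real.sqrt_eq_rpow,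
              ← Real.rpow_mul (by positivity),
              show (1 / 2 : ℝ) * α = α / 2 by ring,
              Real.div_rpow hc.le ht.le, Real.rpow_neg ht.le, hK]
            ring
    · have hempty : {x | t < g x} = ∅ := by
        ext x
        simp only [mem_setOf_eq, mem_empty_iff_false, iff_false, not_lt]
        exact (hgle x).trans (not_lt.mp htT)
      rw [hempty]
      simp
  have step2 : ∫ x, g x ∂μ ≤ d.toReal * (K * J) := by
    have hofReal : ENNReal.ofReal (∫ x, g x ∂μ) = ∫⁻ x, ENNReal.ofReal (g x) ∂μ :=
      ofReal_integral_eq_lintegral_ofReal hgint (Filter.Eventually.of_forall hgnn)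
    have hlayer : ∫⁻ x, ENNReal.ofReal (g x) ∂μ = ∫⁻ t in Ioi (0:ℝ), μ {x | t < g x} :=
      lintegral_eq_lintegral_meas_lt μ (Filter.Eventually.of_forall hgnn) hgcont.aemeasurable
    have hintOn : IntegrableOn (fun t : ℝ => K * t ^ (-(α/2))) (Ioo 0 T) := by
      apply Integrable.const_mul
      have h1 : IntervalIntegrable (fun t : ℝ => t ^ (-(α/2))) volume 0 T :=
        intervalIntegral.intervalIntegrable_rpow' (by linarith)
      exact h1.1.mono_set Ioo_subset_Ioc_self
    have hnnae : 0 ≤ᵐ[volume.restrict (Ioo (0:ℝ) T)] fun t => K * t ^ (-(α/2)) := by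
      filter_upwards [ae_restrict_mem measurableSet_Ioo] with t ht
      exact mul_nonneg hK0.le (Real.rpow_nonneg ht.1.le _)
    have hbound : ∫⁻ t in Ioi (0:ℝ), μ {x | t < g x} ≤
        d * ENNReal.ofReal (∫ t in Ioo (0:ℝ) T, K * t ^ (-(α/2))) := by
      calc ∫⁻ t in Ioi (0:ℝ), μ {x | t < g x}
          ≤ ∫⁻ t in Ioi (0:ℝ),
            (Ioo (0:ℝ) T).indicator (fun t => d * ENNReal.ofReal (K * t ^ (-(α/2)))) t :=
            setLIntegral_mono' measurableSet_Ioi hmeasb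
        _ ≤ ∫⁻ t, (Ioo (0:ℝ) T).indicator
              (fun t => d * ENNReal.ofReal (K * t ^ (-(α/2)))) t :=
            setLIntegral_le_lintegral _ _
        _ = ∫⁻ t in Ioo (0:ℝ) T, d * ENNReal.ofReal (K * t ^ (-(α/2))) :=
            lintegral_indicator measurableSet_Ioo _
        _ = d * ∫⁻ t in Ioo (0:ℝ) T, ENNReal.ofReal (K * t ^ (-(α/2))) :=
            lintegral_const_mul' _ _ hμ
        _ = d * ENNReal.ofReal (∫ t in Ioo (0:ℝ) T, K * t ^ (-(α/2))) := by
            rw [ofReal_integral_eq_lintegral_ofReal hintOn hnnae]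
    have hval : ∫ t in Ioo (0:ℝ) T, K * t ^ (-(α/2)) = K * J := by
      rw [← integral_Ioc_eq_integral_Ioo, ← intervalIntegral.integral_of_le hT0.le,
        intervalIntegral.integral_const_mul,
        integral_rpow (Or.inl (by linarith : (-1:ℝ) < -(α/2))),
        Real.zero_rpow (by linarith : -(α/2) + 1 ≠ 0), hJ,
        show -(α/2) + 1 = 1 - α / 2 by ring]
      ring
    have hfin : ENNReal.ofReal (∫ x, g x ∂μ) ≤ d * ENNReal.ofReal (K * J) := by
      rw [hofReal, hlayer, ← hval]; exact hbound
    calc ∫ x, g x ∂μ = (ENNReal.ofReal (∫ x, g x ∂μ)).toReal :=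
          (ENNReal.toReal_ofReal (integral_nonneg hgnn)).symm
      _ ≤ (d * ENNReal.ofReal (K * J)).toReal :=
          ENNReal.toReal_mono (ENNReal.mul_ne_top hμ ENNReal.ofReal_ne_top) hfin
      _ = d.toReal * (K * J) := by rw [ENNReal.toReal_mul, ENNReal.toReal_ofReal hJ0]
  -- put everything together
  have hpow : c ^ (1 - α) * (K * J) = 2 ^ α * (1 - α/2)⁻¹ := by
    have h1 : T ^ (1 - α/2) = c ^ (-(1 - α/2)) := by
      rw [hT, Real.inv_rpow hc.le, ← Real.rpow_neg hc.le]
    have h2 : c ^ (1-α) * c ^ (α/2) * c ^ (-(1-α/2)) = 1 := by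
      rw [← Real.rpow_add hc, ← Real.rpow_add hc,
        show (1-α) + α/2 + -(1-α/2) = 0 by ring, Real.rpow_zero]
    calc c ^ (1 - α) * (K * J)
        = (c ^ (1-α) * c ^ (α/2) * c ^ (-(1-α/2))) * (2^α * (1-α/2)⁻¹) := by
          rw [hK, hJ, h1]; ring
      _ = 2 ^ α * (1 - α/2)⁻¹ := by rw [h2]; ring
  have hc1α : (0:ℝ) ≤ c ^ (1 - α) := (Real.rpow_pos_of_pos hc _).le
  calc c ^ (1 - α) * |(borelTransform μ z).im|
      ≤ c ^ (1 - α) * (d.toReal * (K * J)) :=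
        mul_le_mul_of_nonneg_left (step1.trans step2) hc1α
    _ = d.toReal * (c ^ (1 - α) * (K * J)) := by ring
    _ = d.toReal * (2 ^ α * (1 - α/2)⁻¹) := by rw [hpow]
    _ ≤ 2 ^ α * Real.pi * d.toReal := by
        have h2 : (1 - α/2)⁻¹ ≤ 2 := by
          rw [show (2:ℝ) = (2⁻¹ : ℝ)⁻¹ by norm_num]
          exact inv_anti₀ (by norm_num) (by linarith)
        have hπ : (2:ℝ) ≤ Real.pi := by linarith [Real.pi_gt_three]
        have h2α : (0:ℝ) < 2 ^ α := Real.rpow_pos_of_pos (by norm_num) α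
        have hdnn : (0:ℝ) ≤ d.toReal := ENNReal.toReal_nonneg
        calc d.toReal * (2 ^ α * (1 - α/2)⁻¹)
            ≤ d.toReal * (2 ^ α * Real.pi) :=
              mul_le_mul_of_nonneg_left
                (mul_le_mul_of_nonneg_left (h2.trans hπ) h2α.le) hdnn
          _ = 2 ^ α * Real.pi * d.toReal := by ring
end

section
/- Let σ be a Borel probability measure on ℝ, let 0 < α ≤ 1, and let μ be a Borel probability measure on ℝ which is uniformly α-Hölder continuous. Then for every y ∈ ℝ and every a > 0, |a^{1−α} · Im(∫_ℝ 1/(x + F_σ(y + ia)⁻¹) dμ(x))| ≤ 2π · d_μ^{α,∞}. -/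
open MeasureTheory Complex Set

lemma measure_Ioo_le_dAlpha (μ : Measure ℝ) (α : ℝ) (x ε : ℝ) (hε : 0 < ε) :
    μ (Set.Ioo (x - ε) (x + ε)) ≤ dAlpha μ α * ENNReal.ofReal ((2 * ε) ^ α) := by
  have hpos : (0:ℝ) < (2 * ε) ^ α := Real.rpow_pos_of_pos (by linarith) α
  have h1 : μ (Set.Ioo (x - ε) (x + ε)) / ENNReal.ofReal ((2 * ε) ^ α) ≤ dAlpha μ α := by
    refine le_trans ?_ (le_iSup _ x)
    refine le_trans ?_ (le_iSup _ ε)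
    exact le_iSup (fun _ : 0 < ε => μ (Set.Ioo (x - ε) (x + ε)) / ENNReal.ofReal ((2 * ε) ^ α)) hε
  exact (ENNReal.div_le_iff (by simp [hpos]) ENNReal.ofReal_ne_top).mp h1

lemma poisson_lintegral (μ : Measure ℝ) [IsProbabilityMeasure μ] {α : ℝ}
    (hα1 : α ≤ 1) (c b : ℝ) (hb : 0 < b) :
    ∫⁻ t, ENNReal.ofReal (b / ((t - c)^2 + b^2)) ∂μ ≤
      dAlpha μ α * ENNReal.ofReal (2^α * b^(α-1) / (1 - α/2)) := by
  set f : ℝ → ℝ := fun t => b / ((t - c)^2 + b^2) with hf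
  have hq : ∀ t : ℝ, 0 < (t - c)^2 + b^2 := fun t => by positivity
  have hfnn : ∀ t, 0 ≤ f t := fun t => le_of_lt (div_pos hb (hq t))
  have hfm : Measurable f := by fun_prop
  have hfle : ∀ t, f t ≤ 1/b := by
    intro t
    rw [hf, div_le_div_iff₀ (hq t) hb]
    nlinarith [sq_nonneg (t - c)]
  rw [lintegral_eq_lintegral_meas_lt μ (ae_of_all _ hfnn) hfm.aemeasurable]
  have hsplit : Set.Ioi (0:ℝ) = Set.Ioc 0 (1/b) ∪ Set.Ioi (1/b) :=
    (Set.Ioc_union_Ioi_eq_Ioi (by positivity)).symm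
  rw [hsplit, lintegral_union measurableSet_Ioi Set.Ioc_disjoint_Ioi_same]
  have h2 : ∫⁻ s in Set.Ioi (1/b), μ {t | s < f t} = 0 := by
    rw [setLIntegral_congr_fun measurableSet_Ioi ?_, lintegral_zero]
    intro s hs
    have : {t : ℝ | s < f t} = ∅ := by
      ext t; simp only [Set.mem_setOf_eq, Set.mem_empty_iff_false, iff_false, not_lt]
      exact (hfle t).trans (le_of_lt hs)
    simp [this]
  rw [h2, add_zero]
  set D := dAlpha μ α with hD
  set K : ℝ := 2^α * b^(α/2) with hK
  have hKpos : 0 < K := by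
    rw [hK]; positivity
  have hexp : -α/2 + 1 ≠ 0 := by
    intro h; nlinarith
  have hstep : ∀ s ∈ Set.Ioc (0:ℝ) (1/b),
      μ {t | s < f t} ≤ D * ENNReal.ofReal (K * s^(-α/2)) := by
    intro s hs
    have hs0 : 0 < s := hs.1
    set r : ℝ := Real.sqrt (b/s) with hr
    have hrpos : 0 < r := Real.sqrt_pos.mpr (by positivity)
    have hsub : {t : ℝ | s < f t} ⊆ Set.Ioo (c - r) (c + r) := by
      intro t ht
      simp only [Set.mem_setOf_eq, hf] at ht
      have h1 : (t - c)^2 + b^2 < b / s := by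
        rw [lt_div_iff₀ hs0]
        rw [lt_div_iff₀ (hq t)] at ht
        linarith [ht, mul_comm s ((t - c)^2 + b^2)]
      have h2 : (t - c)^2 < b / s := by nlinarith [sq_nonneg b]
      have h3 : |t - c| < r := by
        rw [hr]
        exact (Real.lt_sqrt (abs_nonneg (t - c))).mpr (by rwa [_root_.sq_abs])
      rw [abs_lt] at h3
      constructor <;> [linarith [h3.1]; linarith [h3.2]]
    have hcalc : (2 * r) ^ α = K * s^(-α/2) := by
      rw [hr, Real.sqrt_eq_rpow, Real.mul_rpow (by norm_num) (Real.rpow_nonneg (by positivity) _),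
        ← Real.rpow_mul (by positivity)]
      have he : (1:ℝ)/2*α = α/2 := by ring
      rw [he, Real.div_rpow hb.le hs0.le, neg_div, Real.rpow_neg hs0.le, hK,
        div_eq_mul_inv, mul_assoc]
    calc μ {t | s < f t} ≤ μ (Set.Ioo (c - r) (c + r)) := measure_mono hsub
      _ ≤ D * ENNReal.ofReal ((2 * r) ^ α) := measure_Ioo_le_dAlpha μ α c r hrpos
      _ = D * ENNReal.ofReal (K * s^(-α/2)) := by rw [hcalc]
  calc ∫⁻ s in Set.Ioc (0:ℝ) (1/b), μ {t | s < f t}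
      ≤ ∫⁻ s in Set.Ioc (0:ℝ) (1/b), D * ENNReal.ofReal (K * s^(-α/2)) :=
        setLIntegral_mono (by fun_prop) hstep
    _ = D * ∫⁻ s in Set.Ioc (0:ℝ) (1/b), ENNReal.ofReal (K * s^(-α/2)) :=
        lintegral_const_mul D (by fun_prop)
    _ = D * ENNReal.ofReal (∫ s in Set.Ioc (0:ℝ) (1/b), K * s^(-α/2)) := by
        rw [ofReal_integral_eq_lintegral_ofReal]
        · exact (intervalIntegrable_iff_integrableOn_Ioc_of_le (by positivity)).mp
            ((intervalIntegral.intervalIntegrable_rpow' (by linarith)).const_mul K)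
        · filter_upwards [ae_restrict_mem measurableSet_Ioc] with s hs
          exact mul_nonneg hKpos.le (Real.rpow_nonneg hs.1.le _)
    _ ≤ D * ENNReal.ofReal (2^α * b^(α-1) / (1 - α/2)) := by
        have hint : ∫ s in Set.Ioc (0:ℝ) (1/b), K * s^(-α/2)
            = K * ((1/b)^(-α/2+1)/(-α/2+1)) := by
          rw [← intervalIntegral.integral_of_le (by positivity : (0:ℝ) ≤ 1/b),
            intervalIntegral.integral_const_mul, integral_rpow (Or.inl (by linarith)),
            Real.zero_rpow hexp, sub_zero]
        have h1b : ((1:ℝ)/b)^(-α/2+1) = b^(α/2-1) := by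
          rw [one_div, Real.inv_rpow hb.le, ← Real.rpow_neg hb.le]
          congr 1; ring
        have hKb : K * b^(α/2-1) = 2^α * b^(α-1) := by
          rw [hK, mul_assoc, ← Real.rpow_add hb]
          congr 1; ring
        rw [hint, h1b, ← mul_div_assoc, hKb]
        have : -α/2+1 = 1-α/2 := by ring
        rw [this]

lemma integrable_of_bdd {ν : Measure ℝ} [IsProbabilityMeasure ν] {g : ℝ → ℝ}
    (hm : AEStronglyMeasurable g ν) {C : ℝ} (h : ∀ x, |g x| ≤ C) : Integrable g ν :=
  Integrable.mono' (integrable_const C) hm (ae_of_all _ fun x => h x)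

lemma poisson_integral (μ : Measure ℝ) [IsProbabilityMeasure μ] {α : ℝ} (hα0 : 0 < α)
    (hα1 : α ≤ 1) (hD : dAlpha μ α ≠ ⊤) (c b : ℝ) (hb : 0 < b) :
    ∫ t, b / ((t - c)^2 + b^2) ∂μ ≤ 4 * (dAlpha μ α).toReal * b^(α-1) := by
  set f : ℝ → ℝ := fun t => b / ((t - c)^2 + b^2) with hf
  have hq : ∀ t : ℝ, 0 < (t - c)^2 + b^2 := fun t => by positivity
  have hfnn : ∀ t, 0 ≤ f t := fun t => le_of_lt (div_pos hb (hq t))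
  have hfm : Measurable f := by fun_prop
  rw [integral_eq_lintegral_of_nonneg_ae (ae_of_all _ hfnn) hfm.aestronglyMeasurable]
  have hbd := poisson_lintegral μ hα1 c b hb
  have hfin : dAlpha μ α * ENNReal.ofReal (2^α * b^(α-1) / (1 - α/2)) ≠ ⊤ :=
    ENNReal.mul_ne_top hD ENNReal.ofReal_ne_top
  have h1 : (∫⁻ t, ENNReal.ofReal (f t) ∂μ).toReal ≤
      (dAlpha μ α).toReal * (2^α * b^(α-1) / (1 - α/2)) := by
    refine le_trans (ENNReal.toReal_mono hfin hbd) ?_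
    rw [ENNReal.toReal_mul, ENNReal.toReal_ofReal (div_nonneg (by positivity) (by linarith))]
  refine h1.trans ?_
  have h2a : (2:ℝ)^α ≤ 2 := by
    calc (2:ℝ)^α ≤ (2:ℝ)^(1:ℝ) := Real.rpow_le_rpow_of_exponent_le one_le_two hα1
      _ = 2 := Real.rpow_one 2
  have h2b : (0:ℝ) < 2^α := Real.rpow_pos_of_pos two_pos α
  have hbp : (0:ℝ) < b^(α-1) := Real.rpow_pos_of_pos hb _
  have hd2 : (1:ℝ)/2 ≤ 1 - α/2 := by linarith
  have hDt : 0 ≤ (dAlpha μ α).toReal := ENNReal.toReal_nonneg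
  have key : 2^α * b^(α-1) / (1 - α/2) ≤ 4 * b^(α-1) := by
    rw [div_le_iff₀ (by linarith)]
    nlinarith
  calc (dAlpha μ α).toReal * (2^α * b^(α-1) / (1 - α/2))
      ≤ (dAlpha μ α).toReal * (4 * b^(α-1)) := by
        exact mul_le_mul_of_nonneg_left key hDt
    _ = 4 * (dAlpha μ α).toReal * b^(α-1) := by ring

theorem stmt14 (σ : Measure ℝ) [IsProbabilityMeasure σ]
    (α : ℝ) (hα0 : 0 < α) (hα1 : α ≤ 1)
    (μ : Measure ℝ) [IsProbabilityMeasure μ] (hμ : dAlpha μ α ≠ ⊤)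
    (y : ℝ) (a : ℝ) (ha : 0 < a) :
    |a ^ (1 - α) *
        (∫ x : ℝ,
          ((x : ℂ) + (borelTransform σ ((y : ℂ) + (a : ℂ) * Complex.I))⁻¹)⁻¹ ∂μ).im| ≤
      2 * Real.pi * (dAlpha μ α).toReal := by
  set z : ℂ := (y:ℂ) + (a:ℂ) * Complex.I with hz
  have hzre : z.re = y := by simp [hz]
  have hzim : z.im = a := by simp [hz]
  set q : ℝ → ℝ := fun x => (x - y)^2 + a^2 with hqdef
  have hqpos : ∀ x, 0 < q x := fun x => by positivity
  have hqx : ∀ x, q x = (x - y)^2 + a^2 := fun _ => rfl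
  have hsubre : ∀ x : ℝ, ((x:ℂ) - z).re = x - y := fun x => by simp [Complex.sub_re, hzre]
  have hsubim : ∀ x : ℝ, ((x:ℂ) - z).im = -a := fun x => by simp [Complex.sub_im, hzim]
  have hns : ∀ x : ℝ, Complex.normSq ((x:ℂ) - z) = q x := by
    intro x
    rw [Complex.normSq_apply, hsubre, hsubim, hqdef]
    ring
  have hre : ∀ x : ℝ, (((x:ℂ) - z)⁻¹).re = (x - y) / q x := by
    intro x; rw [Complex.inv_re, hsubre, hns]
  have him : ∀ x : ℝ, (((x:ℂ) - z)⁻¹).im = a / q x := by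
    intro x; rw [Complex.inv_im, hsubim, hns, neg_neg]
  -- integrability of the Borel transform integrand
  have hsubne : ∀ x : ℝ, ((x:ℂ) - z) ≠ 0 := by
    intro x h
    have := congrArg Complex.im h
    rw [hsubim] at this
    simp at this
    linarith
  have hcontz : Continuous (fun x : ℝ => ((x:ℂ) - z)⁻¹) :=
    ((Complex.continuous_ofReal.sub continuous_const).inv₀ hsubne)
  have habs : ∀ x : ℝ, ‖((x:ℂ) - z)⁻¹‖ ≤ a⁻¹ := by
    intro x
    rw [norm_inv]
    have h1 : a ≤ ‖(x:ℂ) - z‖ := by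
      have h2 := Complex.abs_im_le_norm ((x:ℂ) - z)
      rw [hsubim, abs_neg, abs_of_pos ha] at h2
      exact h2
    exact inv_anti₀ ha h1
  have hintz : Integrable (fun x : ℝ => ((x:ℂ) - z)⁻¹) σ :=
    Integrable.mono' (integrable_const a⁻¹) hcontz.aestronglyMeasurable (ae_of_all _ habs)
  set F := borelTransform σ z with hFdef
  -- real and imaginary parts of F
  have hFre : F.re = ∫ x, (x - y) / q x ∂σ := by
    have h := integral_re (𝕜 := ℂ) hintz
    simp only [RCLike.re_to_complex] at h
    rw [hFdef, borelTransform, ← h]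
    exact integral_congr_ae (ae_of_all _ fun x => hre x)
  have hFim : F.im = ∫ x, a / q x ∂σ := by
    have h := integral_im (𝕜 := ℂ) hintz
    simp only [RCLike.im_to_complex] at h
    rw [hFdef, borelTransform, ← h]
    exact integral_congr_ae (ae_of_all _ fun x => him x)
  -- helper: continuity of q-quotients and integrability
  have hcontq : Continuous q := by fun_prop
  have hbd2 : ∀ x, |a / q x| ≤ a⁻¹ := by
    intro x
    rw [abs_of_pos (div_pos ha (hqpos x)), div_le_iff₀ (hqpos x)]
    have h1 : a * a ≤ q x := by rw [hqx]; nlinarith [sq_nonneg (x - y)]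
    have h2 : a⁻¹ * (a * a) ≤ a⁻¹ * q x :=
      mul_le_mul_of_nonneg_left h1 (by positivity)
    rw [← mul_assoc, inv_mul_cancel₀ ha.ne', one_mul] at h2
    exact h2
  have hbd1 : ∀ x, |(x - y) / q x| ≤ (2*a)⁻¹ := by
    intro x
    rw [abs_div, abs_of_pos (hqpos x), div_le_iff₀ (hqpos x)]
    have h1 : 2 * a * |x - y| ≤ q x := by
      rw [hqx]
      nlinarith [sq_nonneg (|x - y| - a), _root_.sq_abs (x - y)]
    have h2 : (2*a)⁻¹ * (2 * a * |x - y|) ≤ (2*a)⁻¹ * q x :=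
      mul_le_mul_of_nonneg_left h1 (by positivity)
    rw [← mul_assoc, inv_mul_cancel₀ (by positivity : (2*a) ≠ 0), one_mul] at h2
    linarith [h2]
  have hcont1 : Continuous (fun x : ℝ => (x - y) / q x) :=
    Continuous.div (by fun_prop) hcontq (fun x => (hqpos x).ne')
  have hcont2 : Continuous (fun x : ℝ => a / q x) :=
    Continuous.div continuous_const hcontq (fun x => (hqpos x).ne')
  have hint2 : Integrable (fun x => a / q x) σ :=
    integrable_of_bdd hcont2.aestronglyMeasurable hbd2
  -- positivity of Im F
  have hFimpos : 0 < F.im := by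
    rw [hFim]
    refine (integral_pos_iff_support_of_nonneg
      (fun x => le_of_lt (div_pos ha (hqpos x))) hint2).mpr ?_
    have hsupp : (Function.support fun x => a / q x) = Set.univ := by
      ext x
      simp only [Function.mem_support, Set.mem_univ, iff_true]
      exact (div_pos ha (hqpos x)).ne'
    rw [hsupp]
    simp
  -- Cauchy-Schwarz via variance
  have cs : ∀ (g : ℝ → ℝ) (C : ℝ), Continuous g → (∀ x, |g x| ≤ C) →
      (∫ x, g x ∂σ)^2 ≤ ∫ x, (g x)^2 ∂σ := by
    intro g C hg hC
    have hm : MemLp g 2 σ := MemLp.of_bound hg.aestronglyMeasurable C (ae_of_all _ hC)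
    have h := ProbabilityTheory.variance_nonneg g σ
    rw [ProbabilityTheory.variance_eq_sub hm] at h
    simp only [Pi.pow_apply] at h
    linarith
  -- key inequality : a * normSq F ≤ F.im
  have hsum : ∀ x, ((x - y)/q x)^2 + (a/q x)^2 = 1/q x := by
    intro x
    rw [div_pow, div_pow, ← add_div]
    rw [show (x - y)^2 + a^2 = q x from (hqx x).symm]
    field_simp
  have hint1a : Integrable (fun x => ((x - y)/q x)^2) σ := by
    refine integrable_of_bdd (hcont1.pow 2).aestronglyMeasurable (C := ((2*a)⁻¹)^2) ?_
    intro x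
    rw [_root_.abs_pow]
    exact pow_le_pow_left₀ (abs_nonneg _) (hbd1 x) 2
  have hint1b : Integrable (fun x => (a/q x)^2) σ := by
    refine integrable_of_bdd (hcont2.pow 2).aestronglyMeasurable (C := (a⁻¹)^2) ?_
    intro x
    rw [_root_.abs_pow]
    exact pow_le_pow_left₀ (abs_nonneg _) (hbd2 x) 2
  have hintq : Integrable (fun x => 1/q x) σ := by
    refine integrable_of_bdd ((continuous_const.div hcontq
      fun x => (hqpos x).ne').aestronglyMeasurable) (C := (a^2)⁻¹) ?_
    intro x
    rw [abs_of_pos (by positivity : (0:ℝ) < 1/q x), div_le_iff₀ (hqpos x)]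
    have h1 : (a^2)⁻¹ * a^2 ≤ (a^2)⁻¹ * q x := by
      refine mul_le_mul_of_nonneg_left ?_ (by positivity)
      rw [hqx]; nlinarith [sq_nonneg (x - y)]
    rw [inv_mul_cancel₀ (by positivity : (a:ℝ)^2 ≠ 0)] at h1
    exact h1
  have hkey : a * Complex.normSq F ≤ F.im := by
    have h1 : F.re^2 ≤ ∫ x, ((x - y)/q x)^2 ∂σ := by
      rw [hFre]; exact cs _ ((2*a)⁻¹) hcont1 hbd1
    have h2 : F.im^2 ≤ ∫ x, (a/q x)^2 ∂σ := by
      rw [hFim]; exact cs _ a⁻¹ hcont2 hbd2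
    have h3 : (∫ x, ((x - y)/q x)^2 ∂σ) + (∫ x, (a/q x)^2 ∂σ) = ∫ x, 1/q x ∂σ := by
      rw [← integral_add hint1a hint1b]
      exact integral_congr_ae (ae_of_all _ fun x => hsum x)
    have h4 : a * ∫ x, 1/q x ∂σ = F.im := by
      rw [hFim, ← integral_const_mul]
      exact integral_congr_ae (ae_of_all _ fun x => by simp [mul_one_div, div_eq_mul_inv])
    have h5 : Complex.normSq F = F.re^2 + F.im^2 := by
      rw [Complex.normSq_apply]; ring
    have h6 : a * Complex.normSq F ≤ a * ∫ x, 1/q x ∂σ := by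
      rw [h5]
      calc a * (F.re^2 + F.im^2)
          ≤ a * ((∫ x, ((x - y)/q x)^2 ∂σ) + (∫ x, (a/q x)^2 ∂σ)) :=
            mul_le_mul_of_nonneg_left (add_le_add h1 h2) ha.le
        _ = a * ∫ x, 1/q x ∂σ := by rw [h3]
    exact h6.trans_eq h4
  have hFne : F ≠ 0 := fun h => by rw [h] at hFimpos; simp at hFimpos
  have hnsq : 0 < Complex.normSq F := Complex.normSq_pos.mpr hFne
  set b : ℝ := F.im / Complex.normSq F with hbdef
  have hab : a ≤ b := (le_div_iff₀ hnsq).mpr hkey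
  have hb : 0 < b := lt_of_lt_of_le ha hab
  set u : ℂ := F⁻¹ with hudef
  have huim : u.im = -b := by
    rw [hudef, Complex.inv_im, hbdef, neg_div]
  set cc : ℝ := -u.re with hccdef
  have haddre : ∀ x : ℝ, ((x:ℂ) + u).re = x - cc := fun x => by
    rw [Complex.add_re, Complex.ofReal_re, hccdef]; ring
  have haddim : ∀ x : ℝ, ((x:ℂ) + u).im = -b := fun x => by
    rw [Complex.add_im, Complex.ofReal_im, huim, zero_add]
  have hns2 : ∀ x : ℝ, Complex.normSq ((x:ℂ) + u) = (x - cc)^2 + b^2 := by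
    intro x; rw [Complex.normSq_apply, haddre, haddim]; ring
  have him2 : ∀ x : ℝ, (((x:ℂ) + u)⁻¹).im = b / ((x - cc)^2 + b^2) := by
    intro x; rw [Complex.inv_im, haddim, hns2, neg_neg]
  have haddne : ∀ x : ℝ, ((x:ℂ) + u) ≠ 0 := by
    intro x h
    have h2 := congrArg Complex.im h
    rw [haddim] at h2
    simp at h2
    linarith
  have hcontu : Continuous (fun x : ℝ => ((x:ℂ) + u)⁻¹) :=
    (Complex.continuous_ofReal.add continuous_const).inv₀ haddne
  have habsu : ∀ x : ℝ, ‖((x:ℂ) + u)⁻¹‖ ≤ b⁻¹ := by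
    intro x
    rw [norm_inv]
    have h1 : b ≤ ‖(x:ℂ) + u‖ := by
      have h2 := Complex.abs_im_le_norm ((x:ℂ) + u)
      rw [haddim, abs_neg, abs_of_pos hb] at h2
      exact h2
    exact inv_anti₀ hb h1
  have hintu : Integrable (fun x : ℝ => ((x:ℂ) + u)⁻¹) μ :=
    Integrable.mono' (integrable_const b⁻¹) hcontu.aestronglyMeasurable (ae_of_all _ habsu)
  have hGim : (∫ x : ℝ, ((x:ℂ) + u)⁻¹ ∂μ).im = ∫ x, b / ((x - cc)^2 + b^2) ∂μ := by
    have h := integral_im (𝕜 := ℂ) hintu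
    simp only [RCLike.im_to_complex] at h
    rw [← h]
    exact integral_congr_ae (ae_of_all _ fun x => him2 x)
  have hGnn : 0 ≤ (∫ x : ℝ, ((x:ℂ) + u)⁻¹ ∂μ).im := by
    rw [hGim]
    exact integral_nonneg fun x => le_of_lt (div_pos hb (by positivity))
  have hP := poisson_integral μ hα0 hα1 hμ cc b hb
  have hrp : 0 < a^(1-α) := Real.rpow_pos_of_pos ha _
  rw [_root_.abs_of_nonneg (mul_nonneg hrp.le hGnn)]
  have hba1 : a^(1-α) * b^(α-1) ≤ 1 := by
    have h1 : b^(α-1) = (b^(1-α))⁻¹ := by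
      rw [← Real.rpow_neg hb.le]; congr 1; ring
    rw [h1, ← div_eq_mul_inv, div_le_one (Real.rpow_pos_of_pos hb _)]
    exact Real.rpow_le_rpow ha.le hab (by linarith)
  have hpi : (4:ℝ) ≤ 2 * Real.pi := by nlinarith [Real.pi_gt_three]
  have hDt : (0:ℝ) ≤ (dAlpha μ α).toReal := ENNReal.toReal_nonneg
  calc a^(1-α) * (∫ x : ℝ, ((x:ℂ) + u)⁻¹ ∂μ).im
      ≤ a^(1-α) * (4 * (dAlpha μ α).toReal * b^(α-1)) := by
        rw [hGim]
        exact mul_le_mul_of_nonneg_left hP hrp.le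
    _ = 4 * (dAlpha μ α).toReal * (a^(1-α) * b^(α-1)) := by ring
    _ ≤ 4 * (dAlpha μ α).toReal * 1 :=
        mul_le_mul_of_nonneg_left hba1 (by positivity)
    _ ≤ 2 * Real.pi * (dAlpha μ α).toReal := by nlinarith
end
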